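/- arXiv:2002.02124 — 7 statements merged into one kernel-verified Lean document; each statement's English description precedes it below -/
import Mathlib

section
/- Let $k$ be a field, $R$ a $k$-algebra and $A$ an $R$-algebra such that (1) $A$ is a unique factorization domain, (2) $R$ is a retract of $A$ (i.e., there is a retraction $\Phi : A \to R$), and (3) $A$ is an $\mathbb{A}^1$-form over $R$ with respect to $k$. Then $A \cong R[X]$ as $R$-algebras. -/
set_option maxHeartbeats 1000000

open TensorProduct

/-- A witness that the `R`-algebra `A` is an `𝔸¹`-form over `R` with respect to the base
field `k`: an algebraic field extension `k'` of `k` together with an isomorphism of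
`(R ⊗[k] k')`-algebras between the base change of `A` and the polynomial ring in one
variable over `R ⊗[k] k'`.  (The base change `A ⊗[k] k'` is canonically identified with
`(R ⊗[k] k') ⊗[R] A` as an `(R ⊗[k] k')`-algebra.) -/
structure A1FormWitness (k R A : Type*) [Field k] [CommRing R] [Algebra k R]
    [CommRing A] [Algebra R A] [Algebra k A] [IsScalarTower k R A] where
  k' : Type*
  [fieldk' : Field k']
  [algk' : Algebra k k']
  isAlgebraic : Algebra.IsAlgebraic k k'
  equiv : ((R ⊗[k] k') ⊗[R] A) ≃ₐ[R ⊗[k] k'] Polynomial (R ⊗[k] k')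


open Polynomial

section PolyAux

variable {S : Type*} [CommRing S]

/-- If the constant coefficient of `w` is a unit, then `aeval (w * X)` is injective. -/
lemma aux_injective_aeval_mul_X (w : S[X]) (hw : IsUnit (w.coeff 0)) :
    Function.Injective (Polynomial.aeval (R := S) (w * X)) := by
  have key : ∀ f : S[X], Polynomial.aeval (w * X) f = 0 → f = 0 := by
    intro f hf
    by_contra hf0
    set n := f.natTrailingDegree with hn
    have hfn : f.coeff n ≠ 0 := trailingCoeff_nonzero_iff_nonzero.mpr hf0
    have hco : (Polynomial.aeval (R := S) (w * X) f).coeff n = f.coeff n * (w.coeff 0) ^ n := by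
      rw [Polynomial.aeval_eq_sum_range, Polynomial.finset_sum_coeff]
      rw [Finset.sum_eq_single n]
      · rw [Polynomial.coeff_smul, smul_eq_mul, mul_pow, Polynomial.coeff_mul_X_pow']
        simp only [le_refl, if_true, Nat.sub_self]
        congr 1
        simpa using map_pow (Polynomial.constantCoeff) w n
      · intro i _ hin
        rcases lt_or_gt_of_ne hin with h | h
        · rw [Polynomial.coeff_eq_zero_of_lt_natTrailingDegree h]
          simp
        · rw [Polynomial.coeff_smul, smul_eq_mul, mul_pow, Polynomial.coeff_mul_X_pow',
            if_neg (by omega)]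
          simp
      · intro hn'
        refine absurd (Finset.mem_range.mpr ?_) hn'
        have := Polynomial.natTrailingDegree_le_natDegree (p := f)
        omega
    rw [hf] at hco
    simp only [Polynomial.coeff_zero] at hco
    exact hfn ((hw.pow n).mul_left_eq_zero.mp hco.symm)
  intro f g hfg
  have h0 : Polynomial.aeval (w * X) (f - g) = 0 := by rw [map_sub, hfg, sub_self]
  exact sub_eq_zero.mp (key _ h0)

end PolyAux


open Polynomial

section PolyAux

variable {S : Type*} [CommRing S]

/-- If `w` is a unit of `S[X]`, then `aeval (w * X)` is surjective. -/
lemma aux_surjective_aeval_mul_X (w : S[X]) (hw : IsUnit w) :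
    Function.Surjective (Polynomial.aeval (R := S) (w * X)) := by
  classical
  -- constant coefficient is a unit
  have hw0 : IsUnit (w.coeff 0) := hw.map (Polynomial.constantCoeff)
  obtain ⟨v, hv⟩ := hw0
  set ν : S[X] := w - C (w.coeff 0) with hν
  -- the ideal generated by the (nilpotent) coefficients of ν
  set 𝔫 : Ideal S := Ideal.span ((ν.support.image ν.coeff : Finset S) : Set S) with h𝔫
  have h𝔫fg : 𝔫.FG := ⟨_, rfl⟩
  have hνcoeff : ∀ i, ν.coeff i ∈ 𝔫 := by
    intro i
    by_cases hi : ν.coeff i = 0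
    · rw [hi]; exact 𝔫.zero_mem
    · exact Ideal.subset_span (by
        simp only [Finset.coe_image, Set.mem_image, Finset.mem_coe, mem_support_iff]
        exact ⟨i, hi, rfl⟩)
  have h𝔫nil : 𝔫 ≤ (⊥ : Ideal S).radical := by
    rw [Ideal.span_le]
    rintro x hx
    simp only [Finset.coe_image, Set.mem_image, Finset.mem_coe, mem_support_iff] at hx
    obtain ⟨i, hi, rfl⟩ := hx
    have : IsNilpotent (ν.coeff i) := by
      rcases eq_or_ne i 0 with rfl | hi0
      · simp [hν]
      · have := (Polynomial.isUnit_iff_coeff_isUnit_isNilpotent.mp hw).2 i hi0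
        simpa [hν, Polynomial.coeff_C, hi0] using this
    exact Ideal.mem_radical_iff.mpr (let ⟨n, hn⟩ := this; ⟨n, (Ideal.mem_bot).mpr hn⟩)
  obtain ⟨M, hM⟩ := Ideal.exists_pow_le_of_le_radical_of_fg h𝔫nil h𝔫fg
  -- the range of aeval (w * X)
  set Q := (Polynomial.aeval (R := S) (w * X)).range with hQ
  -- the auxiliary endomorphism β, with range inside Q, congruent to the identity mod 𝔪
  set β : S[X] →ₐ[S] S[X] :=
    (Polynomial.aeval (R := S) (w * X)).comp (Polynomial.aeval (R := S) (C ((↑v⁻¹ : S)) * X))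
    with hβ
  have hβmem : ∀ f, β f ∈ Q := fun f => ⟨Polynomial.aeval (C ((↑v⁻¹ : S)) * X) f, rfl⟩
  have hβX : β X = C (↑v⁻¹ : S) * w * X := by
    simp [hβ, mul_assoc]
  set 𝔪 : Ideal S[X] := Ideal.map (Polynomial.C : S →+* S[X]) 𝔫 with h𝔪
  have hν𝔪 : ν ∈ 𝔪 := by
    rw [h𝔪, Ideal.mem_map_C_iff]
    exact hνcoeff
  have hβX𝔪 : β X - X ∈ 𝔪 := by
    have hC1 : C (↑v⁻¹ : S) * C (w.coeff 0) = 1 := by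
      rw [← Polynomial.C_mul, ← hv]
      simp
    have : β X - X = (C (↑v⁻¹ : S) * ν) * X := by
      rw [hβX, hν]
      linear_combination (X : S[X]) * hC1
    rw [this]
    exact Ideal.mul_mem_right _ _ (Ideal.mul_mem_left _ _ hν𝔪)
  -- β is congruent to the identity modulo 𝔪
  have hβcong : ∀ f : S[X], β f - f ∈ 𝔪 := by
    intro f
    induction f using Polynomial.induction_on with
    | C a =>
               rw [show (C a : S[X]) = algebraMap S S[X] a from rfl, AlgHom.commutes]
               simp
    | add p q hp hq =>
        rw [map_add]
        have : β p + β q - (p + q) = (β p - p) + (β q - q) := by ring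
        rw [this]
        exact Ideal.add_mem _ hp hq
    | monomial n a ih =>
        have key : β (C a * X ^ (n + 1)) - C a * X ^ (n + 1)
            = (β (C a * X ^ n)) * (β X - X) + (β (C a * X ^ n) - C a * X ^ n) * X := by
          rw [pow_succ, ← mul_assoc, map_mul]
          ring
        rw [key]
        exact Ideal.add_mem _ (Ideal.mul_mem_left _ _ hβX𝔪) (Ideal.mul_mem_right _ _ ih)
  -- main approximation step
  have hstep : ∀ (j : ℕ) (e : S[X]), e ∈ 𝔪 ^ j →
      ∃ q', q' ∈ Q ∧ q' ∈ 𝔪 ^ j ∧ e - q' ∈ 𝔪 ^ (j + 1) := by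
    intro j e he
    have hrepr : 𝔪 ^ j = Ideal.map (Polynomial.C : S →+* S[X]) (𝔫 ^ j) := by
      rw [h𝔪, Ideal.map_pow]
    rw [hrepr] at he
    refine Submodule.span_induction ?_ ?_ ?_ ?_ he
    · rintro x ⟨n, hn, rfl⟩
      have hCn : (C n : S[X]) ∈ Q := by
        rw [← Polynomial.algebraMap_eq]
        exact Subalgebra.algebraMap_mem _ n
      refine ⟨C n, hCn, ?_, by simp⟩
      rw [hrepr]
      exact Ideal.mem_map_of_mem _ hn
    · exact ⟨0, Subalgebra.zero_mem _, Submodule.zero_mem _, by simp⟩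
    · rintro x y - - ⟨qx, hqxQ, hqx𝔪, hx⟩ ⟨qy, hqyQ, hqy𝔪, hy⟩
      refine ⟨qx + qy, Subalgebra.add_mem _ hqxQ hqyQ, Submodule.add_mem _ hqx𝔪 hqy𝔪, ?_⟩
      have : x + y - (qx + qy) = (x - qx) + (y - qy) := by ring
      rw [this]
      exact Submodule.add_mem _ hx hy
    · rintro a x - ⟨q', hq'Q, hq'𝔪, hx⟩
      refine ⟨β a * q', Subalgebra.mul_mem _ (hβmem a) hq'Q, Ideal.mul_mem_left _ _ hq'𝔪, ?_⟩
      have hrw : a • x - β a * q' = a * (x - q') + (a - β a) * q' := by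
        simp only [smul_eq_mul]; ring
      rw [hrw, pow_succ]
      refine Submodule.add_mem _ (Ideal.mul_mem_left _ _ hx) ?_
      rw [mul_comm (𝔪 ^ j) 𝔪]
      have h1 : a - β a ∈ 𝔪 := by
        have := 𝔪.neg_mem (hβcong a)
        simpa using this
      exact Ideal.mul_mem_mul h1 hq'𝔪
  -- iterate the approximation
  have hP : ∀ (j : ℕ) (f : S[X]), ∃ q ∈ Q, f - q ∈ 𝔪 ^ j := by
    intro j
    induction j with
    | zero => intro f; exact ⟨0, Subalgebra.zero_mem _, by simp⟩
    | succ j ih =>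
      intro f
      obtain ⟨q, hqQ, he⟩ := ih f
      obtain ⟨q', hq'Q, -, hd⟩ := hstep j (f - q) he
      refine ⟨q + q', Subalgebra.add_mem _ hqQ hq'Q, ?_⟩
      have hr : f - (q + q') = (f - q) - q' := by ring
      rwa [hr]
  intro f
  obtain ⟨q, hqQ, hd⟩ := hP M f
  have h𝔪M : 𝔪 ^ M = ⊥ := by
    rw [h𝔪, ← Ideal.map_pow]
    refine le_antisymm ?_ bot_le
    calc Ideal.map (Polynomial.C : S →+* S[X]) (𝔫 ^ M)
        ≤ Ideal.map (Polynomial.C : S →+* S[X]) ⊥ := Ideal.map_mono hM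
      _ = ⊥ := Ideal.map_bot
  rw [h𝔪M, Ideal.mem_bot, sub_eq_zero] at hd
  obtain ⟨g, hg⟩ := hqQ
  exact ⟨g, by rw [← hd] at hg; exact hg⟩

end PolyAux

open Polynomial

section PolyAux3
variable {S : Type*} [CommRing S]


/-- The translation `X ↦ X + C c` as an algebra automorphism. -/
noncomputable def translationEquiv (c : S) : S[X] ≃ₐ[S] S[X] :=
  AlgEquiv.ofAlgHom (Polynomial.aeval (X + C c)) (Polynomial.aeval (X - C c))
    (by
      refine Polynomial.algHom_ext ?_
      simp)
    (by
      refine Polynomial.algHom_ext ?_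
      simp)

lemma aux_bijective_aeval_unit_mul (u : S[X]) (hu : IsUnit u) (c : S) :
    Function.Bijective (Polynomial.aeval (R := S) ((X - C c) * u)) := by
  set e := translationEquiv c with he
  have hcomp : ∀ (q : S[X]), (e.toAlgHom.comp (Polynomial.aeval (R := S) q) : S[X] →ₐ[S] S[X])
      = Polynomial.aeval (R := S) (e q) := by
    intro q
    refine Polynomial.algHom_ext ?_
    simp
  set q : S[X] := (X - C c) * u with hq
  have heq : e q = (e u) * X := by
    have hX : e X = X + C c := by
      simp [he, translationEquiv]
    rw [hq, map_mul, map_sub, hX]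
    have : e (C c) = C c := by
      rw [← Polynomial.algebraMap_eq]
      exact e.commutes c
    rw [this]
    ring
  have hbij2 : Function.Bijective (Polynomial.aeval (R := S) (e q)) := by
    rw [heq]
    have hu' : IsUnit (e u) := hu.map e.toAlgHom
    constructor
    · exact aux_injective_aeval_mul_X (e u) (hu'.map (Polynomial.constantCoeff))
    · exact aux_surjective_aeval_mul_X (e u) hu'
  have hfun : ⇑(Polynomial.aeval (R := S) (e q)) = ⇑e ∘ ⇑(Polynomial.aeval (R := S) q) := by
    rw [← hcomp q]; rfl
  rw [hfun] at hbij2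
  exact (Function.Bijective.of_comp_iff' e.bijective _).mp hbij2

end PolyAux3


open TensorProduct Polynomial

section MainAux

theorem aux_main {R A S : Type*} [CommRing R] [CommRing A] [CommRing S]
    [Algebra R A] [Algebra R S] [IsDomain A] [UniqueFactorizationMonoid A]
    [Module.Flat R S]
    (π : S →ₗ[R] R) (hπ1 : π 1 = 1)
    (Φ : A →ₐ[R] R)
    (E : (S ⊗[R] A) ≃ₐ[S] Polynomial S) :
    Nonempty (A ≃ₐ[R] Polynomial R) := by
  classical
  -- basic nontriviality
  haveI : Nontrivial R := by
    refine ⟨1, 0, fun h10 => ?_⟩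
    have : (1 : A) = 0 := by
      calc (1 : A) = algebraMap R A 1 := by rw [map_one]
        _ = algebraMap R A 0 := by rw [h10]
        _ = 0 := by rw [map_zero]
    exact one_ne_zero this
  haveI : Nontrivial S := by
    refine ⟨1, 0, fun h10 => ?_⟩
    have : (1 : R) = 0 := by
      calc (1 : R) = π 1 := hπ1.symm
        _ = π 0 := by rw [h10]
        _ = 0 := by rw [map_zero]
    exact one_ne_zero this
  have halginj : Function.Injective (algebraMap R A) := by
    intro r r' hrr'
    have := congrArg Φ hrr'
    simpa using this
  haveI : IsDomain R := Function.Injective.isDomain (algebraMap R A) halginj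
  -- the contraction maps μ
  set μA : S ⊗[R] A →ₗ[R] A :=
    (TensorProduct.lid R A).toLinearMap ∘ₗ (LinearMap.rTensor A π) with hμA
  set μP : S ⊗[R] (Polynomial R) →ₗ[R] Polynomial R :=
    (TensorProduct.lid R (Polynomial R)).toLinearMap ∘ₗ (LinearMap.rTensor (Polynomial R) π)
    with hμP
  have hμA1 : ∀ a : A, μA (1 ⊗ₜ a) = a := by
    intro a
    simp [hμA, hπ1]
  have hμP1 : ∀ f : Polynomial R, μP (1 ⊗ₜ f) = f := by
    intro f
    simp [hμP, hπ1]
  -- includeRight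
  set ι : A →ₐ[R] S ⊗[R] A := Algebra.TensorProduct.includeRight with hι
  -- multiplication by ι x is lTensor of multiplication by x
  have hmul : ∀ (x : A) (w : S ⊗[R] A),
      (ι x) * w = (LinearMap.lTensor S (LinearMap.mulLeft R x)) w := by
    intro x w
    induction w using TensorProduct.induction_on with
    | zero => simp
    | tmul s a => simp [hι, Algebra.TensorProduct.tmul_mul_tmul]
    | add w1 w2 h1 h2 => rw [mul_add, map_add, h1, h2]
  -- regularity (L1)
  have hreg : ∀ (x : A), x ≠ 0 → ∀ w : S ⊗[R] A, (ι x) * w = 0 → w = 0 := by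
    intro x hx w hw
    have hinj : Function.Injective (LinearMap.mulLeft R x) := by
      intro a b hab
      simp only [LinearMap.mulLeft_apply] at hab
      exact mul_left_cancel₀ hx hab
    have := Module.Flat.lTensor_preserves_injective_linearMap
      (M := S) (LinearMap.mulLeft R x) hinj
    apply this
    rw [← hmul, hw, map_zero]
  -- the base-changed retraction
  set ΦS : (S ⊗[R] A) →ₐ[S] S :=
    Algebra.TensorProduct.lift (AlgHom.id S S) ((Algebra.ofId R S).comp Φ)
      (fun x y => Commute.all _ _) with hΦS
  have hΦStmul : ∀ (s : S) (a : A), ΦS (s ⊗ₜ a) = s * algebraMap R S (Φ a) := by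
    intro s a
    simp [hΦS, Algebra.TensorProduct.lift_tmul, Algebra.ofId_apply]
  -- the kernel ideal
  set I : Ideal A := RingHom.ker Φ with hI
  haveI hIprime : I.IsPrime := RingHom.ker_isPrime Φ
  -- kernel of ΦS is the extension of I
  have hkerΦS : RingHom.ker ΦS = Ideal.map ι I := by
    apply le_antisymm
    · intro b hb
      have hb0 : ΦS b = 0 := hb
      have key : ∀ w : S ⊗[R] A, w - algebraMap S (S ⊗[R] A) (ΦS w) ∈ Ideal.map ι I := by
        intro w
        induction w using TensorProduct.induction_on with
        | zero => simp
        | tmul s a =>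
          have h1 : algebraMap S (S ⊗[R] A) (ΦS (s ⊗ₜ a)) = s ⊗ₜ (algebraMap R A (Φ a)) := by
            rw [hΦStmul]
            rw [Algebra.TensorProduct.algebraMap_apply, Algebra.algebraMap_self_apply]
            rw [show s * algebraMap R S (Φ a) = (Φ a) • s from by rw [Algebra.smul_def]; ring]
            rw [TensorProduct.smul_tmul, ← Algebra.algebraMap_eq_smul_one]
          rw [h1, ← TensorProduct.tmul_sub]
          have hmem : a - algebraMap R A (Φ a) ∈ I := by
            rw [hI, RingHom.mem_ker, map_sub]
            simp
          have : (s ⊗ₜ (a - algebraMap R A (Φ a)) : S ⊗[R] A)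
              = (s ⊗ₜ 1) * (ι (a - algebraMap R A (Φ a))) := by
            simp [hι, Algebra.TensorProduct.tmul_mul_tmul]
          rw [this]
          exact Ideal.mul_mem_left _ _ (Ideal.mem_map_of_mem _ hmem)
        | add w1 w2 h1 h2 =>
          have : w1 + w2 - algebraMap S (S ⊗[R] A) (ΦS (w1 + w2))
              = (w1 - algebraMap S (S ⊗[R] A) (ΦS w1))
                + (w2 - algebraMap S (S ⊗[R] A) (ΦS w2)) := by
            rw [map_add, map_add]; ring
          rw [this]
          exact Ideal.add_mem _ h1 h2
      have := key b
      rwa [hb0, map_zero, sub_zero] at this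
    · rw [Ideal.map_le_iff_le_comap]
      intro x hx
      have : ΦS (ι x) = 0 := by
        have : (ι x : S ⊗[R] A) = (1 : S) ⊗ₜ x := rfl
        rw [this, hΦStmul]
        rw [hI, RingHom.mem_ker] at hx
        rw [hx, map_zero, mul_zero]
      simpa [Ideal.mem_comap] using this
  -- transport to the polynomial ring
  set Φhat : Polynomial S →ₐ[S] S := ΦS.comp E.symm.toAlgHom with hΦhatdef
  set s₀ : S := Φhat X with hs₀
  have hΦhat : Φhat = Polynomial.aeval (R := S) s₀ := by
    refine Polynomial.algHom_ext ?_
    simp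
    exact hs₀.symm
  set t' : Polynomial S := X - C s₀ with ht'
  have ht'monic : t'.Monic := Polynomial.monic_X_sub_C s₀
  have hkerΦhat : RingHom.ker Φhat = Ideal.span {t'} := by
    ext f
    rw [RingHom.mem_ker, hΦhat]
    have : Polynomial.aeval (R := S) s₀ f = Polynomial.eval s₀ f := by
      rw [Polynomial.aeval_def, Polynomial.eval]
      rfl
    rw [this, ht', ← Polynomial.ker_evalRingHom, RingHom.mem_ker]
    rfl
  -- the composite θ : A →+* S[X]
  set θ : A →+* Polynomial S := (E.toAlgHom.toRingHom).comp ι.toRingHom with hθ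
  have hθapply : ∀ x : A, θ x = E (ι x) := fun x => rfl
  have hmapθ : Ideal.map θ I = RingHom.ker Φhat := by
    have h1 : Ideal.map θ I
        = Ideal.map (E.toAlgHom.toRingHom) (Ideal.map (ι.toRingHom) I) := by
      rw [Ideal.map_map]
    have h2 : Ideal.map (ι.toRingHom) I = Ideal.map ι I := rfl
    rw [h1, h2, ← hkerΦS]
    ext f
    rw [Ideal.mem_map_iff_of_surjective (E.toAlgHom.toRingHom)
      (fun y => ⟨E.symm y, by simp⟩)]
    constructor
    · rintro ⟨b, hb, rfl⟩
      have h3 : Φhat (E b) = ΦS b := by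
        simp [hΦhatdef]
      rw [RingHom.mem_ker]
      show Φhat (E b) = 0
      rw [h3]
      exact hb
    · intro hf
      refine ⟨E.symm f, ?_, by simp⟩
      rw [RingHom.mem_ker]
      show ΦS (E.symm f) = 0
      exact hf
  have hspan : Ideal.map θ I = Ideal.span {t'} := by rw [hmapθ, hkerΦhat]
  -- I is nonzero
  have hInebot : I ≠ ⊥ := by
    intro hbot
    rw [hbot, Ideal.map_bot] at hspan
    have : t' = 0 := Ideal.span_singleton_eq_bot.mp hspan.symm
    exact Polynomial.X_sub_C_ne_zero s₀ this
  -- a prime element of I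
  obtain ⟨p, hpI, hp⟩ := hIprime.exists_mem_prime_of_ne_bot hInebot
  have hpne : p ≠ 0 := hp.ne_zero
  haveI hspanprime : (Ideal.span {p}).IsPrime := (Ideal.span_singleton_prime hpne).mpr hp
  -- the key "going mod p" lemma (uses flatness)
  have hmodp : ∀ (x : A), x ∉ Ideal.span {p} → ∀ w : S ⊗[R] A,
      (∃ c, (ι x) * w = (ι p) * c) → ∃ d, w = (ι p) * d := by
    intro x hx w hc0
    obtain ⟨c, hc⟩ := hc0
    set q : A →ₗ[R] (A ⧸ Ideal.span {p}) :=
      (Ideal.Quotient.mkₐ R (Ideal.span {p})).toLinearMap with hq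
    have hqapply : ∀ a : A, q a = Ideal.Quotient.mk (Ideal.span {p}) a := fun a => rfl
    have hexact : Function.Exact (LinearMap.mulLeft R p) q := by
      intro y
      constructor
      · intro hy
        rw [hqapply, Ideal.Quotient.eq_zero_iff_mem, Ideal.mem_span_singleton] at hy
        obtain ⟨c', rfl⟩ := hy
        exact ⟨c', by simp [LinearMap.mulLeft_apply]⟩
      · rintro ⟨c', rfl⟩
        rw [hqapply, LinearMap.mulLeft_apply, Ideal.Quotient.eq_zero_iff_mem]
        exact Ideal.mul_mem_right _ _ (Ideal.mem_span_singleton_self p)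
    have hqsurj : Function.Surjective q := Ideal.Quotient.mk_surjective
    have hTexact := lTensor_exact S hexact hqsurj
    -- commuting square : q ∘ mulLeft x = mulLeft x̄ ∘ q
    set xbar := Ideal.Quotient.mk (Ideal.span {p}) x with hxbar
    have hxbarne : xbar ≠ 0 := by
      rw [hxbar, Ne, Ideal.Quotient.eq_zero_iff_mem]
      exact hx
    have hsq : q ∘ₗ (LinearMap.mulLeft R x)
        = (LinearMap.mulLeft R xbar) ∘ₗ q := by
      refine LinearMap.ext fun a => ?_
      simp only [LinearMap.comp_apply, LinearMap.mulLeft_apply, hqapply, map_mul, hxbar]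
    -- (lTensor q) ((ι x) * w) = 0
    have h1 : (LinearMap.lTensor S q) ((ι x) * w) = 0 := by
      rw [hc, hmul p c]
      exact (hTexact _).mpr ⟨c, rfl⟩
    have h2 : (LinearMap.lTensor S (LinearMap.mulLeft R xbar))
        ((LinearMap.lTensor S q) w) = 0 := by
      rw [← LinearMap.comp_apply, ← LinearMap.lTensor_comp, ← hsq,
        LinearMap.lTensor_comp, LinearMap.comp_apply, ← hmul x w]
      exact h1
    -- flatness : multiplication by x̄ is injective after tensoring
    have hinjbar : Function.Injective (LinearMap.mulLeft R xbar) := by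
      intro a b hab
      simp only [LinearMap.mulLeft_apply] at hab
      exact mul_left_cancel₀ hxbarne hab
    have h3 : (LinearMap.lTensor S q) w = 0 := by
      have := Module.Flat.lTensor_preserves_injective_linearMap
        (M := S) (LinearMap.mulLeft R xbar) hinjbar
      apply this
      rw [h2, map_zero]
    have h4 := (hTexact w).mp h3
    obtain ⟨d, hd⟩ := h4
    exact ⟨d, by rw [← hd, ← hmul p d]⟩
  -- I = (p)
  have hIeq : I = Ideal.span {p} := by
    refine le_antisymm ?_ (by rwa [Ideal.span_le, Set.singleton_subset_iff])
    intro x hxI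
    by_contra hx
    have hθx : θ x ∈ Ideal.span {t'} := by
      rw [← hspan]; exact Ideal.mem_map_of_mem _ hxI
    have hθp : θ p ∈ Ideal.span {t'} := by
      rw [← hspan]; exact Ideal.mem_map_of_mem _ hpI
    rw [Ideal.mem_span_singleton] at hθx hθp
    obtain ⟨g, hg⟩ := hθx
    obtain ⟨h2, hh⟩ := hθp
    have hkey : (ι x) * (E.symm h2) = (ι p) * (E.symm g) := by
      apply E.injective
      rw [map_mul, map_mul]
      have e1 : E (ι x) = θ x := rfl
      have e2 : E (ι p) = θ p := rfl
      rw [e1, e2, AlgEquiv.apply_symm_apply, AlgEquiv.apply_symm_apply, hg, hh]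
      ring
    obtain ⟨d, hd⟩ := hmodp x hx (E.symm h2) ⟨E.symm g, hkey⟩
    have hh2 : h2 = θ p * E d := by
      have h5 := congrArg E hd
      rw [map_mul] at h5
      rw [AlgEquiv.apply_symm_apply] at h5
      exact h5
    have hzero : (ι p) * (E.symm (1 - t' * E d)) = 0 := by
      apply E.injective
      rw [map_mul, map_zero, AlgEquiv.apply_symm_apply]
      have e2 : E (ι p) = θ p := rfl
      rw [e2, mul_sub, mul_one]
      have hθpt : θ p = t' * (θ p * E d) := by
        conv_lhs => rw [hh, hh2]
      linear_combination hθpt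
    have h6 := hreg p hpne _ hzero
    have h7 : (1 : Polynomial S) - t' * E d = 0 := by
      have := congrArg E h6
      rwa [AlgEquiv.apply_symm_apply, map_zero] at this
    have h8 : (1 : Polynomial S) = t' * E d := by
      rwa [sub_eq_zero] at h7
    have ht'ker : Φhat t' = 0 := by
      have : t' ∈ RingHom.ker Φhat := by
        rw [hkerΦhat]; exact Ideal.mem_span_singleton_self t'
      exact this
    have : (1 : S) = 0 := by
      calc (1 : S) = Φhat 1 := by rw [map_one]
        _ = Φhat (t' * E d) := by rw [← h8]
        _ = Φhat t' * Φhat (E d) := by rw [map_mul]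
        _ = 0 := by rw [ht'ker, zero_mul]
    exact one_ne_zero this
  -- θ p = t' * u with u a unit
  have hmapp : Ideal.map θ I = Ideal.span {θ p} := by
    rw [hIeq, Ideal.map_span, Set.image_singleton]
  have hspan2 : Ideal.span {θ p} = Ideal.span {t'} := by rw [← hmapp, hspan]
  obtain ⟨u, hu⟩ : t' ∣ θ p := Ideal.mem_span_singleton.mp
    (hspan2 ▸ Ideal.mem_span_singleton_self (θ p))
  obtain ⟨g', hg'⟩ : θ p ∣ t' := Ideal.mem_span_singleton.mp
    (hspan2.symm ▸ Ideal.mem_span_singleton_self t')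
  have hunit : IsUnit u := by
    have hzz : t' * (1 - u * g') = 0 := by
      linear_combination hg' + g' * hu
    have := ht'monic.mul_right_eq_zero_iff.mp hzz
    rw [sub_eq_zero] at this
    exact IsUnit.of_mul_eq_one g' this.symm
  -- the algebra map ψ : R[X] → A and descent
  set ψ : Polynomial R →ₐ[R] A := Polynomial.aeval p with hψ
  set Θ : S ⊗[R] (Polynomial R) →ₐ[S] S ⊗[R] A :=
    Algebra.TensorProduct.map (AlgHom.id S S) ψ with hΘ
  have hΘtmul : ∀ (s : S) (y : Polynomial R), Θ (s ⊗ₜ y) = s ⊗ₜ (ψ y) := by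
    intro s y
    rw [hΘ, Algebra.TensorProduct.map_tmul]
    simp
  set Γ : Polynomial S →ₐ[S] S ⊗[R] (Polynomial R) :=
    Polynomial.aeval ((1 : S) ⊗ₜ[R] (Polynomial.X : Polynomial R)) with hΓ
  have hΓbij : Function.Bijective Γ := by
    have hfun : ⇑Γ = ⇑(polyEquivTensor R S) := by
      funext f
      rw [hΓ, Polynomial.aeval_def, polyEquivTensor_apply]
      rfl
    rw [hfun]
    exact (polyEquivTensor R S).bijective
  set Ξ : Polynomial S →ₐ[S] Polynomial S := (E.toAlgHom.comp Θ).comp Γ with hΞdef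
  have hΞ : Ξ = Polynomial.aeval (R := S) (θ p) := by
    refine Polynomial.algHom_ext ?_
    rw [hΞdef]
    simp only [AlgHom.comp_apply]
    rw [hΓ, Polynomial.aeval_X, hΘ, Algebra.TensorProduct.map_tmul]
    rw [Polynomial.aeval_X]
    simp only [AlgHom.coe_id, id_eq, hψ, Polynomial.aeval_X]
    rfl
  have hΞbij : Function.Bijective Ξ := by
    rw [hΞ, show θ p = t' * u from hu, ht']
    exact aux_bijective_aeval_unit_mul u hunit s₀
  have hΘbij : Function.Bijective Θ := by
    have hcompf : ∀ f, Ξ f = E (Θ (Γ f)) := by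
      intro f
      rw [hΞdef, AlgHom.comp_apply, AlgHom.comp_apply]
      rfl
    have h1 : Function.Bijective (⇑Θ ∘ ⇑Γ) := by
      have hh1 : ⇑Θ ∘ ⇑Γ = ⇑E.symm ∘ ⇑Ξ := by
        funext f
        simp only [Function.comp_apply, hcompf f, AlgEquiv.symm_apply_apply]
      rw [hh1]
      exact E.symm.bijective.comp hΞbij
    exact (Function.Bijective.of_comp_iff _ hΓbij).mp h1
  have hψinj : Function.Injective ψ := by
    intro y z hyz
    have h1 : Θ ((1:S) ⊗ₜ y) = Θ ((1:S) ⊗ₜ z) := by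
      rw [hΘtmul, hΘtmul, hyz]
    have h2 := hΘbij.1 h1
    have h3 := congrArg μP h2
    rwa [hμP1, hμP1] at h3
  have hμnat : ∀ w, μA (Θ w) = ψ (μP w) := by
    intro w
    induction w using TensorProduct.induction_on with
    | zero => simp
    | tmul s y =>
      rw [hΘtmul, hμA, hμP]
      simp only [LinearMap.coe_comp, Function.comp_apply, LinearMap.rTensor_tmul,
        LinearEquiv.coe_coe, TensorProduct.lid_tmul]
      have := map_smul ψ.toLinearMap (π s) y
      simp only [AlgHom.toLinearMap_apply] at this
      exact this.symm
    | add w1 w2 h1 h2 =>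
      rw [map_add, map_add, map_add, map_add, h1, h2]
  have hψsurj : Function.Surjective ψ := by
    intro a
    obtain ⟨w, hw⟩ := hΘbij.2 ((1:S) ⊗ₜ a)
    refine ⟨μP w, ?_⟩
    rw [← hμnat, hw, hμA1]
  exact ⟨(AlgEquiv.ofBijective ψ ⟨hψinj, hψsurj⟩).symm⟩

end MainAux


/-- **Corollary 4.** Let `k` be a field, `R` a `k`-algebra and `A` an `R`-algebra such that
(1) `A` is a UFD, (2) `R` is a retract of `A`, and (3) `A` is an `𝔸¹`-form over `R`
(with respect to `k`).  Then `A ≅ R[X]` as `R`-algebras. -/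
theorem factorial_A1_form_with_retraction_trivial
    (k R A : Type*) [Field k] [CommRing R] [Algebra k R]
    [CommRing A] [Algebra R A] [Algebra k A] [IsScalarTower k R A]
    [IsDomain A] [UniqueFactorizationMonoid A]
    (Φ : A →ₐ[R] R)
    (h : Nonempty (A1FormWitness k R A)) :
    Nonempty (A ≃ₐ[R] Polynomial R) := by
  obtain ⟨W⟩ := h
  letI : Field W.k' := W.fieldk'
  letI : Algebra k W.k' := W.algk'
  -- a basis of k' over k containing 1
  have h1li : LinearIndepOn k id ({1} : Set W.k') :=
    (linearIndepOn_singleton_iff k).mpr one_ne_zero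
  let bk' : Module.Basis _ k W.k' := Module.Basis.extend h1li
  have h1mem : (1 : W.k') ∈ h1li.extend (Set.subset_univ _) :=
    h1li.subset_extend _ rfl
  let i₀ : h1li.extend (Set.subset_univ _) := ⟨1, h1mem⟩
  have hb1 : bk' i₀ = 1 := Module.Basis.extend_apply_self h1li i₀
  -- base change to an R-basis of S := R ⊗[k] k'
  let bS : Module.Basis _ R (R ⊗[k] W.k') := bk'.baseChange R
  haveI : Module.Free R (R ⊗[k] W.k') := Module.Free.of_basis bS
  haveI : Module.Flat R (R ⊗[k] W.k') := inferInstance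
  -- the R-linear retraction π of S
  let π : (R ⊗[k] W.k') →ₗ[R] R := bS.coord i₀
  have hπ1 : π 1 = 1 := by
    have h1S : (1 : R ⊗[k] W.k') = bS i₀ := by
      rw [show bS i₀ = 1 ⊗ₜ bk' i₀ from Module.Basis.baseChange_apply R bk' i₀, hb1,
        Algebra.TensorProduct.one_def]
    rw [show π = bS.coord i₀ from rfl, h1S, Module.Basis.coord_apply, Module.Basis.repr_self]
    simp
  exact aux_main π hπ1 Φ W.equiv
end

section
/- Let $k$ be a field and $A$ a $k$-algebra which is an $\mathbb{A}^1$-form over $k$ such that (1) $A$ is a unique factorization domain, and (2) $A$ has a $k$-rational point, i.e., there exists a $k$-algebra homomorphism $A \to k$. Then $A \cong k[X]$ as $k$-algebras. -/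
open TensorProduct

/-- A witness that the `k`-algebra `A` is an `𝔸¹`-form over the field `k`:
an algebraic field extension `k'` of `k` together with an isomorphism of `k'`-algebras
`A ⊗[k] k' ≅ k'[X]`. -/
structure A1FormWitnessOverField (k A : Type*) [Field k] [CommRing A] [Algebra k A] where
  k' : Type*
  [fieldk' : Field k']
  [algk' : Algebra k k']
  isAlgebraic : Algebra.IsAlgebraic k k'
  equiv : (k' ⊗[k] A) ≃ₐ[k'] Polynomial k'

open Polynomial

section Helpers

variable {k k' A : Type*} [Field k] [Field k'] [Algebra k k'] [CommRing A] [Algebra k A]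

/-- Coordinatewise divisibility in a base change. -/
lemma aux_smul_coords [IsDomain A]
    (p q : A) (hp : p ≠ 0) (hdvd : ∀ a : A, p ∣ q * a → p ∣ a)
    (t t' : A ⊗[k] k') (h : q • t = p • t') : ∃ s, t = p • s := by
  classical
  set b := (Module.Basis.ofVectorSpace k k').baseChange A with hb
  have hcoord : ∀ i, p ∣ b.repr t i := by
    intro i
    apply hdvd
    have := congrArg (fun z => b.repr z i) h
    simp only [map_smul, Finsupp.smul_apply, smul_eq_mul] at this
    exact ⟨b.repr t' i, this⟩
  let f : A → A := fun a => if h : p ∣ a then h.choose else 0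
  have hf0 : f 0 = 0 := by
    simp only [f, dif_pos (dvd_zero p)]
    have h2 : p * (dvd_zero p).choose = p * 0 := by
      rw [← (dvd_zero p).choose_spec, mul_zero]
    exact mul_left_cancel₀ hp h2
  have hpf : ∀ a : A, p ∣ a → a = p * f a := by
    intro a ha
    simp only [f, dif_pos ha]
    exact ha.choose_spec
  refine ⟨b.repr.symm ((b.repr t).mapRange f hf0), ?_⟩
  have hr : b.repr t = p • ((b.repr t).mapRange f hf0) := by
    ext i
    simp only [Finsupp.smul_apply, Finsupp.mapRange_apply, smul_eq_mul]
    exact hpf _ (hcoord i)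
  calc t = b.repr.symm (b.repr t) := (b.repr.symm_apply_apply t).symm
    _ = b.repr.symm (p • ((b.repr t).mapRange f hf0)) := by rw [← hr]
    _ = p • b.repr.symm ((b.repr t).mapRange f hf0) := map_smul _ _ _

/-- The base change of the rational point. -/
noncomputable def PhiT (Φ : A →ₐ[k] k) : (k' ⊗[k] A) →ₐ[k'] k' :=
  Algebra.TensorProduct.lift (AlgHom.id k' k') ((IsScalarTower.toAlgHom k k k').comp Φ)
    (fun _ _ => Commute.all _ _)

lemma PhiT_tmul (Φ : A →ₐ[k] k) (c : k') (a : A) :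
    PhiT Φ (c ⊗ₜ a) = c * algebraMap k k' (Φ a) := by
  simp [PhiT, Algebra.TensorProduct.lift_tmul]

lemma ker_PhiT (Φ : A →ₐ[k] k) :
    RingHom.ker (PhiT (k' := k') Φ) =
      Ideal.map (Algebra.TensorProduct.includeRight : A →ₐ[k] k' ⊗[k] A)
        (RingHom.ker Φ) := by
  apply le_antisymm
  · intro z hz
    have key : ∀ z : k' ⊗[k] A, z - algebraMap k' _ (PhiT Φ z) ∈
        Ideal.map (Algebra.TensorProduct.includeRight : A →ₐ[k] k' ⊗[k] A) (RingHom.ker Φ) := by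
      intro z
      induction z using TensorProduct.induction_on with
      | zero => simp
      | tmul c a =>
        have e1 : c ⊗ₜ[k] a - algebraMap k' (k' ⊗[k] A) (PhiT Φ (c ⊗ₜ a)) =
            (c ⊗ₜ[k] 1) * ((1 : k') ⊗ₜ[k] (a - algebraMap k A (Φ a))) := by
          rw [PhiT_tmul]
          simp only [Algebra.TensorProduct.tmul_mul_tmul, one_mul, mul_one]
          rw [TensorProduct.tmul_sub]
          congr 1
          rw [Algebra.TensorProduct.algebraMap_apply]
          simp only [Algebra.algebraMap_self, RingHom.id_apply]
          rw [mul_comm, ← Algebra.smul_def, TensorProduct.smul_tmul, Algebra.smul_def, mul_one]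
        rw [e1]
        exact Ideal.mul_mem_left _ _ (Ideal.mem_map_of_mem _ (by
          simp [RingHom.mem_ker, map_sub]))
      | add x y hx hy =>
        have h3 : (x + y) - algebraMap k' _ (PhiT Φ (x + y)) =
            (x - algebraMap k' _ (PhiT Φ x)) + (y - algebraMap k' _ (PhiT Φ y)) := by
          rw [map_add, map_add]; ring
        rw [h3]; exact Ideal.add_mem _ hx hy
    have := key z
    rwa [RingHom.mem_ker.mp hz, map_zero, sub_zero] at this
  · rw [Ideal.map_le_iff_le_comap]
    intro x hx
    simp only [Ideal.mem_comap, RingHom.mem_ker, Algebra.TensorProduct.includeRight_apply]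
    rw [RingHom.mem_ker] at hx
    change PhiT Φ (1 ⊗ₜ x) = 0
    rw [PhiT_tmul, hx, map_zero, mul_zero]

/-- Kernel of a `k'`-algebra map to `k'` through an equivalence with `k'[X]`. -/
lemma ker_via_equiv {B : Type*} [CommRing B] [Algebra k' B]
    (Φ' : B →ₐ[k'] k') (e : B ≃ₐ[k'] k'[X]) :
    RingHom.ker Φ' = Ideal.span {e.symm (X - C (Φ' (e.symm X)))} := by
  set a : k' := Φ' (e.symm X)
  have hg : (Φ'.comp (e.symm : k'[X] ≃ₐ[k'] B).toAlgHom : k'[X] →ₐ[k'] k') = aeval a := by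
    apply Polynomial.algHom_ext
    simp [a]
  have hker : RingHom.ker Φ' =
      Ideal.comap (e : B ≃+* k'[X]) (RingHom.ker (aeval a : k'[X] →ₐ[k'] k')) := by
    ext z
    simp only [RingHom.mem_ker, Ideal.mem_comap]
    constructor
    · intro hz
      have : (Φ'.comp (e.symm : k'[X] ≃ₐ[k'] B).toAlgHom) (e z) = 0 := by simpa using hz
      rw [hg] at this; exact this
    · intro hz
      have := hg ▸ hz
      simpa using this
  rw [hker]
  have h4 : RingHom.ker (aeval a : k'[X] →ₐ[k'] k') = Ideal.span {X - C a} := by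
    rw [← ker_evalRingHom a]
    rfl
  rw [h4, ← Ideal.map_symm, Ideal.map_span, Set.image_singleton]
  rfl

/-- Base change preserves linear independence. -/
lemma baseChange_linearIndependent {ι : Type*} (v : ι → A) (hv : LinearIndependent k v) :
    LinearIndependent k' (fun i => ((1 : k') ⊗ₜ[k] v i : k' ⊗[k] A)) := by
  set W := Submodule.span k (Set.range v)
  set bw : Module.Basis ι k W := Module.Basis.span hv
  set j := (W.subtype).baseChange k'
  have hj : Function.Injective j := by
    have := Module.Flat.lTensor_preserves_injective_linearMap (M := k') (W.subtype)
      W.injective_subtype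
    rwa [← LinearMap.baseChange_eq_ltensor] at this
  have li := (bw.baseChange k').linearIndependent.map' j (LinearMap.ker_eq_bot.mpr hj)
  have heq : (⇑j ∘ ⇑(bw.baseChange k')) = fun i => ((1 : k') ⊗ₜ[k] v i : k' ⊗[k] A) := by
    funext i
    simp only [Function.comp_apply, Module.Basis.baseChange_apply, j, LinearMap.baseChange_tmul,
      Submodule.coe_subtype]
    rw [Module.Basis.span_apply]
  rwa [heq] at li

end Helpers

set_option maxHeartbeats 4000000 in
/-- **Theorem 2.** Let `k` be a field and `A` an `𝔸¹`-form over `k` such that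
(1) `A` is a UFD, and (2) `A` has a `k`-rational point (i.e. a `k`-algebra homomorphism
`A → k`).  Then `A ≅ k[X]`. -/
theorem factorial_A1_form_over_field_with_rational_point_trivial
    (k A : Type*) [Field k] [CommRing A] [Algebra k A]
    [IsDomain A] [UniqueFactorizationMonoid A]
    (h : Nonempty (A1FormWitnessOverField k A))
    (Φ : A →ₐ[k] k) :
    Nonempty (A ≃ₐ[k] Polynomial k) := by
  classical
  obtain ⟨w⟩ := h
  obtain ⟨k', halg, e⟩ := w
  set ι : A →ₐ[k] k' ⊗[k] A := Algebra.TensorProduct.includeRight with hιdef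
  -- injectivity of includeRight
  have hι : Function.Injective ι := by
    have hL : Function.Injective (Algebra.linearMap k k') := (algebraMap k k').injective
    have hrt : Function.Injective ((Algebra.linearMap k k').rTensor A) :=
      Module.Flat.rTensor_preserves_injective_linearMap _ hL
    intro x y hxy
    have : ((Algebra.linearMap k k').rTensor A) ((TensorProduct.lid k A).symm x)
        = ((Algebra.linearMap k k').rTensor A) ((TensorProduct.lid k A).symm y) := by
      simp only [TensorProduct.lid_symm_apply, LinearMap.rTensor_tmul, Algebra.linearMap_apply,
        map_one]
      exact hxy
    exact (TensorProduct.lid k A).symm.injective (hrt this)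
  haveI : IsDomain (k' ⊗[k] A) := MulEquiv.isDomain k'[X] e.toMulEquiv
  set Φ' : (k' ⊗[k] A) →ₐ[k'] k' := PhiT Φ with hΦ'
  set m : Ideal A := RingHom.ker Φ with hm
  set a₀ : k' := Φ' (e.symm X) with ha₀
  set f : k' ⊗[k] A := e.symm (X - C a₀) with hf
  have h1 : RingHom.ker Φ' = Ideal.span {f} := ker_via_equiv Φ' e
  have h2 : RingHom.ker Φ' = Ideal.map ι m := ker_PhiT Φ
  have hf0 : f ≠ 0 := by
    simp only [hf, ne_eq, EmbeddingLike.map_eq_zero_iff]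
    exact X_sub_C_ne_zero a₀
  have hfnu : ¬ IsUnit f := by
    intro hu
    have : (1 : k' ⊗[k] A) ∈ RingHom.ker Φ' := by
      rw [h1, Ideal.span_singleton_eq_top.mpr hu]; trivial
    rw [RingHom.mem_ker, map_one] at this
    exact one_ne_zero this
  have hmem_f : ∀ x ∈ m, ∃ t, ι x = t * f := by
    intro x hx
    have : ι x ∈ Ideal.span {f} := by
      rw [← h1, h2]
      exact Ideal.mem_map_of_mem _ hx
    obtain ⟨t, ht⟩ := Ideal.mem_span_singleton'.mp this
    exact ⟨t, ht.symm⟩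
  -- m is a nonzero prime ideal
  haveI hmprime : m.IsPrime := RingHom.ker_isPrime _
  have hm0 : m ≠ ⊥ := by
    intro hbot
    have : Ideal.span {f} = ⊥ := by
      rw [← h1, h2, hbot, Ideal.map_bot]
    exact hf0 (by simpa [this] using Ideal.mem_span_singleton_self f)
  -- a prime element of m
  obtain ⟨x, hxm, hx0⟩ := Submodule.exists_mem_ne_zero_of_ne_bot hm0
  have hxnu : ¬ IsUnit x := by
    intro hu
    have := hmprime.ne_top
    exact this (Ideal.eq_top_of_isUnit_mem m hxm hu)
  obtain ⟨F, hFprime, hFx⟩ := UniqueFactorizationMonoid.exists_prime_factors x hx0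
  have hprodm : F.prod ∈ m := by
    obtain ⟨u, hu⟩ := hFx
    have h7 : F.prod = x * ↑u⁻¹ := by
      calc F.prod = F.prod * (↑u * ↑u⁻¹) := by rw [Units.mul_inv, mul_one]
        _ = (F.prod * ↑u) * ↑u⁻¹ := by ring
        _ = x * ↑u⁻¹ := by rw [hu]
    rw [h7]
    exact Ideal.mul_mem_right _ _ hxm
  obtain ⟨p, hpF, hpm⟩ := (hmprime.multiset_prod_mem_iff_exists_mem F).mp hprodm
  have hp : Prime p := hFprime p hpF
  -- every prime in m is divisible by p
  have hkey : ∀ q : A, Prime q → q ∈ m → p ∣ q := by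
    intro q hq hqm
    by_contra hnd
    obtain ⟨t, ht⟩ := hmem_f p hpm
    obtain ⟨t', ht'⟩ := hmem_f q hqm
    have hrel : ι q * t = ι p * t' := by
      rw [ht, ht']; ring
    -- transport to A ⊗ k'
    set γ : (k' ⊗[k] A) ≃ₐ[k] (A ⊗[k] k') := Algebra.TensorProduct.comm k k' A with hγ
    have hγι : ∀ z : A, γ (ι z) = algebraMap A (A ⊗[k] k') z := by
      intro z
      simp [hγ, hιdef, Algebra.TensorProduct.comm_tmul, Algebra.TensorProduct.algebraMap_apply]
    have hsm : q • γ t = p • γ t' := by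
      have := congrArg γ hrel
      rw [map_mul, map_mul, hγι, hγι, ← Algebra.smul_def, ← Algebra.smul_def] at this
      exact this
    obtain ⟨s, hs⟩ := aux_smul_coords p q hp.ne_zero
      (fun a ha => (hp.dvd_mul.mp ha).resolve_left hnd) (γ t) (γ t') hsm
    have hts : t = ι p * γ.symm s := by
      have := congrArg γ.symm hs
      rw [γ.symm_apply_apply, Algebra.smul_def, map_mul, ← hγι p, γ.symm_apply_apply] at this
      exact this
    have hcancel : ι p = ι p * (γ.symm s * f) := by
      calc ι p = t * f := ht
        _ = (ι p * γ.symm s) * f := by rw [hts]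
        _ = ι p * (γ.symm s * f) := by ring
    have hιp0 : ι p ≠ 0 := fun hz => hp.ne_zero (hι (by simpa using hz))
    have h5 : ι p * 1 = ι p * (γ.symm s * f) := by rw [mul_one]; exact hcancel
    have h6 := mul_left_cancel₀ hιp0 h5
    exact hfnu (IsUnit.of_mul_eq_one (γ.symm s) (by rw [mul_comm]; exact h6.symm))
  -- m = (p)
  have hmp : m = Ideal.span {p} := by
    apply le_antisymm
    · intro q hqm
      rw [Ideal.mem_span_singleton]
      by_cases hq0 : q = 0
      · simp [hq0]
      by_cases hqu : IsUnit q
      · exact absurd (Ideal.eq_top_of_isUnit_mem m hqm hqu) hmprime.ne_top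
      obtain ⟨G, hGprime, hGq⟩ := UniqueFactorizationMonoid.exists_prime_factors q hq0
      have hGm : G.prod ∈ m := by
        obtain ⟨u, hu⟩ := hGq
        have h7 : G.prod = q * ↑u⁻¹ := by
          calc G.prod = G.prod * (↑u * ↑u⁻¹) := by rw [Units.mul_inv, mul_one]
            _ = (G.prod * ↑u) * ↑u⁻¹ := by ring
            _ = q * ↑u⁻¹ := by rw [hu]
        rw [h7]
        exact Ideal.mul_mem_right _ _ hqm
      obtain ⟨r, hrG, hrm⟩ := (hmprime.multiset_prod_mem_iff_exists_mem G).mp hGm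
      have : p ∣ r := hkey r (hGprime r hrG) hrm
      exact this.trans ((Multiset.dvd_prod hrG).trans hGq.dvd)
    · rw [Ideal.span_le, Set.singleton_subset_iff]
      exact hpm
  -- f is associated to ι p
  have hassoc : Associated f (ι p) := by
    rw [← Ideal.span_singleton_eq_span_singleton]
    rw [← h1, h2, hmp, Ideal.map_span, Set.image_singleton]
  obtain ⟨u, hu⟩ := hassoc
  -- e (ι p) = (X - C a₀) * C c for a unit c
  have heιp : e (ι p) = (X - C a₀) * e u := by
    rw [← hu, map_mul, hf, AlgEquiv.apply_symm_apply]
  obtain ⟨c, hcu, hce⟩ := Polynomial.isUnit_iff.mp (u.isUnit.map e)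
  have hc0 : c ≠ 0 := hcu.ne_zero
  set F₁ : k'[X] := (X - C a₀) * C c with hF₁
  have heF : e (ι p) = F₁ := by rw [heιp, ← hce]
  -- the automorphism of k'[X] sending F₁ to X
  set G₁ : k'[X] := C c⁻¹ * X + C a₀ with hG₁
  have hGF : aeval G₁ F₁ = X := by
    rw [hF₁, map_mul, map_sub, aeval_X, aeval_C, aeval_C, hG₁]
    calc (C c⁻¹ * X + C a₀ - C a₀) * C c = (C c⁻¹ * C c) * X := by ring
      _ = X := by rw [← C_mul, inv_mul_cancel₀ hc0, C_1, one_mul]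
  have hFG : aeval F₁ G₁ = X := by
    rw [hG₁, map_add, map_mul, aeval_X, aeval_C, aeval_C, hF₁]
    calc C c⁻¹ * ((X - C a₀) * C c) + C a₀ = (C c⁻¹ * C c) * (X - C a₀) + C a₀ := by ring
      _ = X := by rw [← C_mul, inv_mul_cancel₀ hc0, C_1]; ring
  set ε : k'[X] ≃ₐ[k'] k'[X] := AlgEquiv.ofAlgHom (aeval G₁) (aeval F₁)
    (by apply Polynomial.algHom_ext; simpa using hGF)
    (by apply Polynomial.algHom_ext; simpa using hFG) with hε
  set χ : (k' ⊗[k] A) ≃ₐ[k'] k'[X] := e.trans ε with hχ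
  have hχp : χ (ι p) = X := by
    rw [hχ]
    simp only [AlgEquiv.trans_apply, heF]
    exact hGF
  -- the candidate map
  set φ : k[X] →ₐ[k] A := aeval p with hφ
  -- the commuting square
  have hsquare : ∀ q : k[X], χ (ι (φ q)) = q.map (algebraMap k k') := by
    have heq : ((χ.toAlgHom.restrictScalars k).comp (ι.comp φ)) =
        (Polynomial.mapAlgHom (Algebra.ofId k k')) := by
      apply Polynomial.algHom_ext
      simp only [AlgHom.comp_apply, AlgHom.coe_restrictScalars', AlgEquiv.toAlgHom_eq_coe,
        AlgEquiv.coe_algHom, hφ, aeval_X, Polynomial.coe_mapAlgHom, Polynomial.map_X]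
      exact hχp
    intro q
    have hq := DFunLike.congr_fun heq q
    simp only [AlgHom.comp_apply, AlgHom.coe_restrictScalars', AlgEquiv.toAlgHom_eq_coe,
      AlgEquiv.coe_algHom, Polynomial.coe_mapAlgHom] at hq
    exact hq
  have hinj : Function.Injective φ := by
    intro x y hxy
    have : x.map (algebraMap k k') = y.map (algebraMap k k') := by
      rw [← hsquare, ← hsquare, hxy]
    exact Polynomial.map_injective _ (algebraMap k k').injective this
  clear_value ι Φ' m a₀ f F₁ G₁ ε χ φ
  clear h1 h2 hmem_f hm0 hxm hx0 hxnu hFprime hFx hprodm hpF hkey hmp hu heιp hcu hce hc0 hF₁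
    heF hG₁ hGF hFG hε hχ hf hf0 hfnu ha₀ hΦ' hm hmprime hpm
  have hsurj : Function.Surjective φ := by
    intro a
    set v : ℕ → A := fun n => p ^ n with hv
    have hvli : LinearIndependent k v := by
      rw [linearIndependent_iff]
      intro l hl
      have hev : φ (⟨⟨l⟩⟩ : k[X]) = 0 := by
        rw [hφ, Polynomial.aeval_def, Polynomial.eval₂_eq_sum]
        rw [← hl, Finsupp.linearCombination_apply]
        rw [Polynomial.sum, Finsupp.sum]
        apply Finset.sum_congr
        · rfl
        · intro n _
          rw [Algebra.smul_def]
          rfl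
      have h0 : (⟨⟨l⟩⟩ : k[X]) = 0 := hinj (by rw [hev, map_zero])
      simpa using (Polynomial.ofFinsupp_eq_zero.mp h0)
    by_cases hspan : a ∈ Submodule.span k (Set.range v)
    · have hle : Submodule.span k (Set.range v) ≤ LinearMap.range φ.toLinearMap := by
        rw [Submodule.span_le]
        rintro _ ⟨n, rfl⟩
        refine ⟨X ^ n, ?_⟩
        have hXn : φ (X ^ n) = p ^ n := by rw [hφ, map_pow, aeval_X]
        simpa [hv] using hXn
      obtain ⟨q, hq⟩ := hle hspan
      exact ⟨q, hq⟩
    · exfalso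
      set q' : k'[X] := χ (ι a) with hq'
      have hχs : χ.symm X = ι p := by
        rw [← hχp, AlgEquiv.symm_apply_apply]
      have hρ : (χ.symm : k'[X] →ₐ[k'] (k' ⊗[k] A)) = aeval (ι p) := by
        apply Polynomial.algHom_ext
        simpa using hχs
      have hιa : ι a = aeval (ι p) q' := by
        have : ι a = χ.symm q' := by rw [hq', AlgEquiv.symm_apply_apply]
        rw [this, ← hρ]; rfl
      have hmem : ι a ∈ Submodule.span k' (Set.range fun n => ι (v n)) := by
        rw [hιa, Polynomial.aeval_def, Polynomial.eval₂_eq_sum, Polynomial.sum]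
        apply Submodule.sum_mem
        intro n _
        rw [← Algebra.smul_def]
        apply Submodule.smul_mem
        apply Submodule.subset_span
        exact ⟨n, by rw [hv]; simp [map_pow]⟩
      -- independence contradiction
      have hw : LinearIndependent k (fun o => Option.casesOn' o a v : Option ℕ → A) :=
        hvli.option hspan
      have hbc := baseChange_linearIndependent (k' := k') _ hw
      have hfam : (fun o => ((1:k') ⊗ₜ[k] (Option.casesOn' o a v) : k' ⊗[k] A)) =
          (fun o => Option.casesOn' o ((1:k') ⊗ₜ[k] a) (fun n => (1:k') ⊗ₜ[k] v n)) := by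
        funext o
        cases o <;> rfl
      rw [hfam] at hbc
      have hnot := (linearIndependent_option'.mp hbc).2
      apply hnot
      have hιtmul : ∀ z : A, ι z = ((1:k') ⊗ₜ[k] z : k' ⊗[k] A) := by
        intro z; rw [hιdef]; rfl
      have hfam2 : (fun n => ι (v n)) = (fun n => ((1:k') ⊗ₜ[k] v n : k' ⊗[k] A)) := by
        funext n; rw [hιtmul]
      rw [hfam2, hιtmul a] at hmem
      exact hmem
  exact ⟨(AlgEquiv.ofBijective φ ⟨hinj, hsurj⟩).symm⟩
end

section
/- Let $R$ be a commutative ring, let $\lambda$ be a unit of the polynomial ring $R[X]$, and set $g = \lambda X$. Then the $R$-subalgebra of $R[X]$ generated by $g$ is all of $R[X]$, i.e., $R[g] = R[X]$. -/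
open Polynomial

/-- Let `R` be a commutative ring and `λ` a unit of the polynomial ring `R[X]`.
Set `g = λ • X`.  Then the `R`-subalgebra of `R[X]` generated by `g` is all of `R[X]`,
i.e. `R[g] = R[X]`. -/
theorem adjoin_unit_mul_X_eq_top (R : Type*) [CommRing R] (lam : (Polynomial R)ˣ) :
    Algebra.adjoin R {(lam : Polynomial R) * Polynomial.X} = ⊤ := by
  classical
  set A := Algebra.adjoin R {(lam : Polynomial R) * Polynomial.X} with hA
  set g : Polynomial R := (lam : Polynomial R) * Polynomial.X with hgdef
  have hg : g ∈ A := Algebra.subset_adjoin rfl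
  set w : Polynomial R := ((lam⁻¹ : (Polynomial R)ˣ) : Polynomial R) with hw
  set v : R := w.coeff 0 with hv
  set s : Polynomial R := w.divX * (lam : Polynomial R) with hs
  -- key identity: X = C v * g + s * X ^ 2
  have hid : (Polynomial.X : Polynomial R) = Polynomial.C v * g + s * Polynomial.X ^ 2 := by
    have h1 : w * (lam : Polynomial R) = 1 := lam.inv_mul
    have h2 : Polynomial.X * w.divX + Polynomial.C v = w := Polynomial.X_mul_divX_add w
    calc (Polynomial.X : Polynomial R) = (w * (lam : Polynomial R)) * Polynomial.X := by
            rw [h1, one_mul]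
      _ = ((Polynomial.X * w.divX + Polynomial.C v) * (lam : Polynomial R)) * Polynomial.X := by
            rw [h2]
      _ = Polynomial.C v * g + s * Polynomial.X ^ 2 := by rw [hgdef, hs]; ring
  -- the coefficients of s are nilpotent
  have hwunit : IsUnit w := (lam⁻¹).isUnit
  have hdnil : IsNilpotent w.divX := by
    rw [Polynomial.isNilpotent_iff]
    intro i
    rw [Polynomial.coeff_divX]
    exact (Polynomial.coeff_isUnit_isNilpotent_of_isUnit hwunit).2 (i + 1) (Nat.succ_ne_zero i)
  have hsnil : IsNilpotent s := by
    obtain ⟨m, hm⟩ := hdnil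
    exact ⟨m, by rw [hs, mul_pow, hm, zero_mul]⟩
  have hscoeff : ∀ i, IsNilpotent (s.coeff i) := Polynomial.isNilpotent_iff.mp hsnil
  -- the ideal generated by the coefficients of s
  set I : Ideal R := Ideal.span (↑(s.support.image s.coeff) : Set R) with hI
  have hmemI : ∀ i, s.coeff i ∈ I := by
    intro i
    by_cases h : s.coeff i = 0
    · rw [h]; exact I.zero_mem
    · exact Ideal.subset_span (Finset.mem_coe.mpr
        (Finset.mem_image_of_mem _ (Polynomial.mem_support_iff.mpr h)))
  have hIfg : I.FG := ⟨s.support.image s.coeff, rfl⟩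
  have hIrad : I ≤ (⊥ : Ideal R).radical := by
    rw [Ideal.span_le]
    intro x hx
    obtain ⟨i, _, rfl⟩ := Finset.mem_image.mp (Finset.mem_coe.mp hx)
    obtain ⟨n, hn⟩ := hscoeff i
    exact ⟨n, by simpa using hn⟩
  obtain ⟨k, hk⟩ := Ideal.exists_pow_le_of_le_radical_of_fg hIrad hIfg
  -- expansion lemma
  have expand : ∀ (c : R) (n : ℕ), Polynomial.C c * (s * Polynomial.X ^ n) =
      ∑ i ∈ s.support, Polynomial.C (c * s.coeff i) * Polynomial.X ^ (i + n) := by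
    intro c n
    conv_lhs => rw [Polynomial.as_sum_support s]
    rw [Finset.sum_mul, Finset.mul_sum]
    refine Finset.sum_congr rfl fun i _ => ?_
    rw [← Polynomial.C_mul_X_pow_eq_monomial, map_mul, pow_add]
    ring
  -- main downward induction
  have key : ∀ d j, k ≤ j + d → ∀ c ∈ I ^ j, ∀ n : ℕ,
      Polynomial.C c * Polynomial.X ^ n ∈ A := by
    intro d
    induction d with
    | zero =>
      intro j hj c hc n
      have hc0 : c = 0 := by
        have : c ∈ I ^ k := Ideal.pow_le_pow_right (by omega) hc
        simpa using hk this
      rw [hc0, map_zero, zero_mul]; exact A.zero_mem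
    | succ d ih =>
      intro j hj c hc n
      induction n generalizing c with
      | zero =>
        simpa using A.algebraMap_mem c
      | succ n ihn =>
        have step : Polynomial.C c * Polynomial.X ^ (n + 1) =
            (Polynomial.C (c * v) * Polynomial.X ^ n) * g +
              Polynomial.C c * (s * Polynomial.X ^ (n + 2)) := by
          have h3 : (Polynomial.C (c * v) * Polynomial.X ^ n) * g +
              Polynomial.C c * (s * Polynomial.X ^ (n + 2)) =
              Polynomial.C c * Polynomial.X ^ n *
                (Polynomial.C v * g + s * Polynomial.X ^ 2) := by
            rw [map_mul]; ring
          rw [h3, ← hid]; ring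
        rw [step]
        refine add_mem (mul_mem (ihn _ (Ideal.mul_mem_right v _ hc)) hg) ?_
        rw [expand]
        refine Subalgebra.sum_mem A fun i _ => ?_
        refine ih (j + 1) (by omega) _ ?_ _
        rw [pow_succ]
        exact Ideal.mul_mem_mul hc (hmemI i)
  -- conclude X ∈ A
  have hX : Polynomial.X ∈ A := by
    rw [hid]
    refine add_mem (mul_mem (A.algebraMap_mem v) hg) ?_
    have h1 : s * Polynomial.X ^ 2 = Polynomial.C (1 : R) * (s * Polynomial.X ^ 2) := by simp
    rw [h1, expand]
    refine Subalgebra.sum_mem A fun i _ => ?_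
    exact key k 1 (by omega) _ (by simpa [pow_one] using hmemI i) _
  refine eq_top_iff.mpr ?_
  rw [← Polynomial.adjoin_X]
  exact Algebra.adjoin_le (by simpa using hX)
end

section
/- Let $R$ be a commutative ring and $A$ an $R$-algebra such that (1) $A$ is an integral domain, (2) there is a retraction $\Phi : A \to R$, and (3) there exists a faithfully flat ring homomorphism $\eta : R \to R'$ such that $A \otimes_R R' \cong R'[X]$ as $R'$-algebras. Then $P = \mathrm{Ker}\,\Phi$ is a prime ideal of $A$ of height one. -/
open TensorProduct

set_option maxHeartbeats 2000000 in
/-- Let `R` be a ring and `A` an `R`-algebra such that (1) `A` is an integral domain,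
(2) there is a retraction `Φ : A → R`, and (3) there exists a faithfully flat ring
homomorphism `η : R → R'` (encoded as a faithfully flat `R`-algebra structure on `R'`)
such that `A ⊗_R R' ≅ R'[X]` as `R'`-algebras.  Then `P = ker Φ` is a prime ideal of `A`
of height one (height taken in the poset of prime ideals, i.e. in `PrimeSpectrum A`). -/
theorem ker_retraction_isPrime_height_one
    (R A R' : Type*) [CommRing R] [CommRing A] [Algebra R A] [IsDomain A]
    (Φ : A →ₐ[R] R)
    [CommRing R'] [Algebra R R'] [Module.FaithfullyFlat R R']
    (e : (R' ⊗[R] A) ≃ₐ[R'] Polynomial R') :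
    ∃ hP : (RingHom.ker (Φ : A →+* R)).IsPrime,
      Order.height (⟨RingHom.ker (Φ : A →+* R), hP⟩ : PrimeSpectrum A) = 1 := by
  classical
  open Polynomial in
  set P : Ideal A := RingHom.ker (Φ : A →+* R) with hPdef
  -- basic nontriviality facts
  have hNR : Nontrivial R := (algebraMap R A).domain_nontrivial
  have hNR' : Nontrivial R' :=
    (Algebra.TensorProduct.rid R R' R').symm.toEquiv.nontrivial
  -- the algebra map `R → A` is injective, since `Φ` retracts it
  have hinjRA : Function.Injective (algebraMap R A) := by
    intro r s hrs
    have := congrArg Φ hrs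
    simpa using this
  -- `R` is a domain, so `P` is prime
  have hdomR : IsDomain R := hinjRA.isDomain _
  have hP : P.IsPrime := RingHom.ker_isPrime (Φ : A →+* R)
  -- the inclusion `A → R' ⊗[R] A`
  set ι : A →ₐ[R] R' ⊗[R] A := Algebra.TensorProduct.includeRight with hιdef
  -- injectivity of `ι`
  have hι0 : ∀ x : A, ι x = 0 → x = 0 := by
    intro x hx
    by_contra hx0
    have hlx : Function.Injective (LinearMap.toSpanSingleton R A x) := by
      intro r s hrs
      have h0 : (r - s) • x = 0 := by
        simp only [LinearMap.toSpanSingleton_apply] at hrs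
        rw [sub_smul, hrs, sub_self]
      rw [Algebra.smul_def] at h0
      rcases mul_eq_zero.1 h0 with h | h
      · have : r - s = 0 := hinjRA (by simpa using h)
        exact sub_eq_zero.1 this
      · exact absurd h hx0
    have hlT : Function.Injective
        ((LinearMap.toSpanSingleton R A x).lTensor R') :=
      Module.Flat.lTensor_preserves_injective_linearMap _ hlx
    have h11 : ((LinearMap.toSpanSingleton R A x).lTensor R')
        ((1 : R') ⊗ₜ[R] (1 : R)) = (1 : R') ⊗ₜ[R] x := by
      simp
    have hx' : ((1 : R') ⊗ₜ[R] (1 : R) : R' ⊗[R] R) = 0 := by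
      apply hlT
      rw [h11, map_zero]
      simpa [hιdef] using hx
    have := congrArg (Algebra.TensorProduct.rid R R' R') hx'
    simp only [map_zero] at this
    rw [Algebra.TensorProduct.rid_tmul, one_smul] at this
    exact one_ne_zero this
  -- the base-changed retraction `Φ' : R' ⊗ A → R'`
  set m : R' ⊗[R] A →ₐ[R'] R' ⊗[R] R :=
    Algebra.TensorProduct.map (AlgHom.id R' R') Φ with hmdef
  set Φ' : R' ⊗[R] A →ₐ[R'] R' :=
    (Algebra.TensorProduct.rid R R' R').toAlgHom.comp m with hΦ'def
  have hΦ'rid : ∀ z : R' ⊗[R] A, Φ' z = (Algebra.TensorProduct.rid R R' R') (m z) := by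
    intro z
    rw [hΦ'def]
    simp
  have hΦ'ι : ∀ x : A, Φ' (ι x) = algebraMap R R' (Φ x) := by
    intro x
    simp [hΦ'def, hmdef, hιdef, Algebra.TensorProduct.rid_tmul, Algebra.algebraMap_eq_smul_one]
  -- the induced retraction of `R'[X]`, which is evaluation at some `a : R'`
  set ψ : Polynomial R' →ₐ[R'] R' := Φ'.comp e.symm.toAlgHom with hψdef
  set a : R' := ψ X with hadef
  have hψeval : (ψ : Polynomial R' →+* R') = evalRingHom a := by
    apply Polynomial.ringHom_ext
    · intro r
      have h1 : ψ (C r) = r := by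
        simpa using ψ.commutes r
      simp [h1]
    · simp [hadef]
  have hψap : ∀ f : Polynomial R', ψ f = Polynomial.eval a f := by
    intro f
    have := congrFun (congrArg (⇑) hψeval) f
    simpa using this
  have hΦ'e : ∀ z : R' ⊗[R] A, Φ' z = ψ (e z) := by
    intro z
    simp [hψdef]
  -- the generator `τ` of the extension of `P`
  set τ : R' ⊗[R] A := e.symm (X - C a) with hτdef
  have heτ : e τ = X - C a := by simp [hτdef]
  have hdvd : ∀ w : R' ⊗[R] A, Φ' w = 0 → τ ∣ w := by
    intro w hw
    rw [hΦ'e, hψap] at hw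
    have : (X - C a) ∣ e w := Polynomial.dvd_iff_isRoot.2 hw
    obtain ⟨g, hg⟩ := this
    refine ⟨e.symm g, ?_⟩
    have := congrArg e.symm hg
    simpa [hτdef] using this
  have hΦ'τ : Φ' τ = 0 := by
    rw [hΦ'e, heτ, hψap]
    simp
  -- `τ ≠ 0`
  have hτne : τ ≠ 0 := by
    intro h
    have : (X - C a : Polynomial R') = 0 := by
      rw [← heτ, h, map_zero]
    exact Polynomial.X_sub_C_ne_zero a this
  -- elements divisible by all powers of `τ` vanish
  have hτpow : ∀ z : R' ⊗[R] A, (∀ n : ℕ, τ ^ n ∣ z) → z = 0 := by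
    intro z hz
    have hez : ∀ n : ℕ, (X - C a) ^ n ∣ e z := by
      intro n
      obtain ⟨c, hc⟩ := hz n
      refine ⟨e c, ?_⟩
      rw [hc, map_mul, map_pow, heτ]
    by_contra hz0
    have hez0 : e z ≠ 0 := fun h => hz0 (by
      have := congrArg e.symm h
      simpa using this)
    set n : ℕ := (e z).natDegree + 1 with hn
    obtain ⟨g, hg⟩ := hez n
    have hgne : g ≠ 0 := by
      intro h
      rw [h, mul_zero] at hg
      exact hez0 hg
    have hmon : ((X - C a) ^ n).Monic := (Polynomial.monic_X_sub_C a).pow n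
    have hdeg : (e z).natDegree = ((X - C a) ^ n).natDegree + g.natDegree := by
      rw [hg]
      exact Polynomial.natDegree_mul' (by
        rw [hmon.leadingCoeff, one_mul]
        exact Polynomial.leadingCoeff_ne_zero.2 hgne)
    have hdegpow : ((X - C a) ^ n).natDegree = n := by
      rw [(Polynomial.monic_X_sub_C a).natDegree_pow, Polynomial.natDegree_X_sub_C, mul_one]
    omega
  -- the key lemma: any prime strictly below `P` is zero
  have main : ∀ Q : Ideal A, Q.IsPrime → Q < P → Q = ⊥ := by
    intro Q hQ hQP
    obtain ⟨s, hsP, hsQ⟩ := SetLike.exists_of_lt hQP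
    -- base-changed quotient map
    set map' : R' ⊗[R] A →ₐ[R'] R' ⊗[R] (A ⧸ Q) :=
      Algebra.TensorProduct.map (AlgHom.id R' R') (Ideal.Quotient.mkₐ R Q) with hmap'def
    set J : Ideal (R' ⊗[R] A) := RingHom.ker (map' : R' ⊗[R] A →+* R' ⊗[R] (A ⧸ Q))
      with hJdef
    have hmemJ : ∀ z : R' ⊗[R] A, z ∈ J ↔ map' z = 0 := fun z => Iff.rfl
    -- `ι` maps `Q` into `J`
    have h1 : ∀ x ∈ Q, ι x ∈ J := by
      intro x hx
      rw [hmemJ]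
      have : map' (ι x) = (1 : R') ⊗ₜ[R] (Ideal.Quotient.mkₐ R Q x) := by
        simp [hmap'def, hιdef]
      rw [this, Ideal.Quotient.mkₐ_eq_mk, Ideal.Quotient.eq_zero_iff_mem.2 hx, tmul_zero]
    -- `J` is contained in the kernel of `Φ'`
    have hJP : ∀ z ∈ J, Φ' z = 0 := by
      intro z hz
      have hQle : Q ≤ P := le_of_lt hQP
      have hΦ0 : ∀ x ∈ Q, Φ x = 0 := fun x hx => hQle hx
      have hfac : ∀ w : R' ⊗[R] A, m w = (Algebra.TensorProduct.map (AlgHom.id R' R')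
          (Ideal.Quotient.liftₐ Q Φ hΦ0)) (map' w) := by
        intro w
        induction w using TensorProduct.induction_on with
        | zero => simp
        | tmul r x =>
          simp [hmdef, hmap'def, Ideal.Quotient.liftₐ_apply, Ideal.Quotient.lift_mk]
          rfl
        | add u v hu hv => rw [map_add, hu, hv, map_add, map_add]
      have hmz0 : m z = 0 := by
        rw [hfac z, (hmemJ z).1 hz, map_zero]
      rw [hΦ'rid, hmz0, map_zero]
    -- multiplication by `ι s` is injective modulo `J`
    have hsbar : (Ideal.Quotient.mk Q s : A ⧸ Q) ≠ 0 := by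
      rw [Ne, Ideal.Quotient.eq_zero_iff_mem]
      exact hsQ
    have hmulinj : Function.Injective
        ((LinearMap.mulLeft R (Ideal.Quotient.mk Q s : A ⧸ Q)).lTensor R') :=
      Module.Flat.lTensor_preserves_injective_linearMap _ (by
        intro u v huv
        simp only [LinearMap.mulLeft_apply] at huv
        exact mul_left_cancel₀ hsbar huv)
    have hmulid : ∀ w : R' ⊗[R] (A ⧸ Q),
        ((LinearMap.mulLeft R (Ideal.Quotient.mk Q s : A ⧸ Q)).lTensor R') w
          = ((1 : R') ⊗ₜ[R] (Ideal.Quotient.mk Q s : A ⧸ Q)) * w := by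
      intro w
      induction w using TensorProduct.induction_on with
      | zero => simp
      | tmul r d => simp [Algebra.TensorProduct.tmul_mul_tmul]
      | add u v hu hv => rw [map_add, mul_add, hu, hv]
    have Ls : ∀ z : R' ⊗[R] A, ι s * z ∈ J → z ∈ J := by
      intro z hz
      rw [hmemJ] at hz ⊢
      rw [map_mul] at hz
      have hmis : map' (ι s) = (1 : R') ⊗ₜ[R] (Ideal.Quotient.mk Q s : A ⧸ Q) := by
        simp [hmap'def, hιdef]
      rw [hmis] at hz
      apply hmulinj
      rw [hmulid, hz, map_zero]
    -- multiplication by `τ` is injective modulo `J`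
    have hΦ's : Φ' (ι s) = 0 := by
      rw [hΦ'ι]
      have : Φ s = 0 := hsP
      rw [this, map_zero]
    obtain ⟨u, hu⟩ := hdvd (ι s) hΦ's
    have Lτ : ∀ z : R' ⊗[R] A, τ * z ∈ J → z ∈ J := by
      intro z hz
      apply Ls
      have : ι s * z = u * (τ * z) := by rw [hu]; ring
      rw [this]
      exact J.mul_mem_left u hz
    -- every element of `J` is divisible by all powers of `τ`
    have hJpow : ∀ n : ℕ, ∀ x ∈ J, ∃ y ∈ J, x = τ ^ n * y := by
      intro n
      induction n with
      | zero => exact fun x hx => ⟨x, hx, by rw [pow_zero, one_mul]⟩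
      | succ n ih =>
        intro x hx
        obtain ⟨y, hyJ, hxy⟩ := ih x hx
        obtain ⟨y', hy'⟩ := hdvd y (hJP y hyJ)
        have hy'J : y' ∈ J := Lτ y' (by rw [← hy']; exact hyJ)
        exact ⟨y', hy'J, by rw [hxy, hy', pow_succ]; ring⟩
    -- conclude `Q = ⊥`
    apply (Submodule.eq_bot_iff Q).2
    intro x hx
    apply hι0
    apply hτpow
    intro n
    obtain ⟨y, _, hy⟩ := hJpow n (ι x) (h1 x hx)
    exact ⟨y, hy⟩
  -- `P ≠ ⊥`
  have hPne : P ≠ ⊥ := by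
    intro hPbot
    have hΦinj : Function.Injective Φ.toLinearMap := by
      intro x y hxy
      have : x - y ∈ P := by
        simp only [hPdef, RingHom.mem_ker, map_sub]
        simpa [sub_eq_zero] using hxy
      rw [hPbot] at this
      simpa [sub_eq_zero] using this
    have hlin : ∀ z : R' ⊗[R] A, m z = Φ.toLinearMap.lTensor R' z := by
      intro z
      induction z using TensorProduct.induction_on with
      | zero => simp
      | tmul r x => simp [hmdef]
      | add u v hu hv => rw [map_add, map_add, hu, hv]
    have hminj : Function.Injective (Φ.toLinearMap.lTensor R') :=
      Module.Flat.lTensor_preserves_injective_linearMap _ hΦinj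
    have hmz : m τ = 0 := by
      apply (Algebra.TensorProduct.rid R R' R').injective
      rw [map_zero, ← hΦ'rid]
      exact hΦ'τ
    have : τ = 0 := by
      apply hminj
      rw [← hlin, hmz, map_zero]
    exact hτne this
  -- now assemble the height computation
  refine ⟨hP, ?_⟩
  set x : PrimeSpectrum A := ⟨P, hP⟩ with hxdef
  set b : PrimeSpectrum A := ⟨⊥, Ideal.bot_prime⟩ with hbdef
  have hlt : ∀ y : PrimeSpectrum A, y < x → y = b := by
    intro y hy
    have h1 : y.asIdeal ≤ P := hy.le
    have h2 : y.asIdeal ≠ P := fun h => hy.ne (PrimeSpectrum.ext h)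
    have : y.asIdeal = ⊥ := main y.asIdeal y.isPrime (lt_of_le_of_ne h1 h2)
    exact PrimeSpectrum.ext this
  have hbx : b < x := by
    refine lt_of_le_of_ne (show b.asIdeal ≤ x.asIdeal from bot_le) ?_
    intro h
    exact hPne (congrArg PrimeSpectrum.asIdeal h).symm
  have hbmin : IsMin b := by
    intro c hc
    exact show (⊥ : Ideal A) ≤ c.asIdeal from bot_le
  have hb0 : Order.height b = 0 := Order.height_eq_zero.2 hbmin
  have h1le : Order.height x ≤ (1 : ℕ) := by
    rw [Order.height_le_coe_iff]
    intro y hy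
    rw [hlt y hy, hb0]
    exact_mod_cast Nat.zero_lt_one
  have : Order.height x = ((0 : ℕ) : ℕ∞) + 1 := by
    rw [Order.height_eq_coe_add_one_iff]
    refine ⟨lt_of_le_of_lt h1le (by exact_mod_cast WithTop.coe_lt_top (1 : ℕ)),
      ⟨b, hbx, by rw [hb0, Nat.cast_zero]⟩, ?_⟩
    intro y hy
    rw [hlt y hy, hb0, Nat.cast_zero]
  rw [this]
  simp
end

section
/- Let $k$ be a field of characteristic $p \geq 2$, let $a \in k$ with $a \notin k^p$, and let $A = k[X,Y]/(Y^p - X - aX^p)$. Then: (i) there exists a $k$-algebra homomorphism $A \to k$ (a retraction of $A$ to $k$); and (ii) if $k'$ is a field extension of $k$ containing an element $b$ with $b^p = a$, then $A \otimes_k k' \cong k'[T]$ as $k'$-algebras. -/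
open TensorProduct MvPolynomial

/-- The `k`-algebra `k[X,Y]/(Y^p - X - a·X^p)` (with `X = X 0`, `Y = X 1`). -/
abbrev ExampleAlg (k : Type*) [Field k] (p : ℕ) (a : k) :=
  MvPolynomial (Fin 2) k ⧸
    Ideal.span {(X 1 : MvPolynomial (Fin 2) k) ^ p - X 0 - C a * (X 0) ^ p}

set_option maxHeartbeats 1000000 in
set_option synthInstance.maxHeartbeats 400000 in
/-- **Example 2, positive parts.** Let `k` be a field of characteristic `p ≥ 2`, `a ∈ k`
with `a ∉ kᵖ`, and `A = k[X,Y]/(Y^p - X - a·X^p)`.  Then (i) there is a `k`-algebra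
homomorphism `A → k` (a retraction of `A` to `k`), and (ii) for every field extension
`k'` of `k` containing an element `b` with `b^p = a`, one has `A ⊗[k] k' ≅ k'[T]` as
`k'`-algebras. -/
theorem exampleAlg_retraction_and_form (k : Type*) [Field k] (p : ℕ) [CharP k p]
    (hp : 2 ≤ p) (a : k) (ha : ∀ c : k, c ^ p ≠ a) :
    Nonempty (ExampleAlg k p a →ₐ[k] k) ∧
      ∀ (k' : Type*) [Field k'] [Algebra k k'] (b : k'),
        b ^ p = algebraMap k k' a →
        Nonempty ((k' ⊗[k] ExampleAlg k p a) ≃ₐ[k'] Polynomial k') := by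
  have hp0 : p ≠ 0 := by omega
  haveI : Fact p.Prime := ⟨(CharP.char_is_prime_or_zero k p).resolve_right hp0⟩
  set f : MvPolynomial (Fin 2) k := X 1 ^ p - X 0 - C a * X 0 ^ p with hf
  constructor
  · refine ⟨Ideal.Quotient.liftₐ _ (aeval (0 : Fin 2 → k)) ?_⟩
    intro x hx
    have hle : Ideal.span {f} ≤ RingHom.ker (aeval (0 : Fin 2 → k)).toRingHom := by
      rw [Ideal.span_le, Set.singleton_subset_iff]
      simp [RingHom.mem_ker, hf, zero_pow hp0]
    exact hle hx
  · intro k' _ _ b hb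
    haveI : CharP k' p := charP_of_injective_algebraMap (algebraMap k k').injective p
    set a' : k' := algebraMap k k' a with ha'
    set I : Ideal (MvPolynomial (Fin 2) k) := Ideal.span {f} with hI
    set mkA : MvPolynomial (Fin 2) k →ₐ[k] ExampleAlg k p a := Ideal.Quotient.mkₐ k I
      with hmkA
    -- the map `A → k'[T]`, `X ↦ T^p`, `Y ↦ T + b T^p`
    set g : Fin 2 → Polynomial k' :=
      ![Polynomial.X ^ p, Polynomial.X + Polynomial.C b * Polynomial.X ^ p] with hg
    have haev : (aeval g) f = 0 := by
      have : (aeval g) f =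
          (Polynomial.X + Polynomial.C b * Polynomial.X ^ p) ^ p - Polynomial.X ^ p -
            Polynomial.C a' * (Polynomial.X ^ p) ^ p := by
        simp [hf, hg, ha', Polynomial.algebraMap_apply, algebraMap_eq]
      rw [this, add_pow_char, mul_pow, ← Polynomial.C_pow, hb]
      ring
    have hker : I ≤ RingHom.ker (aeval g).toRingHom := by
      rw [hI, Ideal.span_le, Set.singleton_subset_iff]
      simpa [RingHom.mem_ker] using haev
    set ψ₀ : ExampleAlg k p a →ₐ[k] Polynomial k' :=
      Ideal.Quotient.liftₐ I (aeval g) (fun x hx => hker hx) with hψ₀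
    set φ : (k' ⊗[k] ExampleAlg k p a) →ₐ[k'] Polynomial k' :=
      Algebra.TensorProduct.lift (Algebra.ofId k' (Polynomial k')) ψ₀
        (fun x y => Commute.all _ _) with hφ
    set t : k' ⊗[k] ExampleAlg k p a := (1 : k') ⊗ₜ[k] mkA (X 1) - b ⊗ₜ[k] mkA (X 0) with ht
    set ψ : Polynomial k' →ₐ[k'] (k' ⊗[k] ExampleAlg k p a) := Polynomial.aeval t with hψ
    -- the surjection from `k'[X,Y]`
    set χ : MvPolynomial (Fin 2) k' →ₐ[k'] (k' ⊗[k] ExampleAlg k p a) :=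
      aeval ![(1 : k') ⊗ₜ[k] mkA (X 0), (1 : k') ⊗ₜ[k] mkA (X 1)] with hχ
    haveI : MonoidHomClass (MvPolynomial (Fin 2) k' →ₐ[k'] (k' ⊗[k] ExampleAlg k p a))
        (MvPolynomial (Fin 2) k') (k' ⊗[k] ExampleAlg k p a) := RingHomClass.toMonoidHomClass
    haveI : MonoidHomClass (Polynomial k' →ₐ[k'] (k' ⊗[k] ExampleAlg k p a))
        (Polynomial k') (k' ⊗[k] ExampleAlg k p a) := RingHomClass.toMonoidHomClass
    have hmkAf : mkA f = 0 := by
      have hfI : f ∈ I := Ideal.subset_span (Set.mem_singleton f)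
      rw [hmkA, Ideal.Quotient.mkₐ_eq_mk]
      exact Ideal.Quotient.eq_zero_iff_mem.mpr hfI
    have hχf : χ (X 1 ^ p - X 0 - C a' * X 0 ^ p) = 0 := by
      have h1 : χ (X 1 ^ p - X 0 - C a' * X 0 ^ p) =
          (1 : k') ⊗ₜ[k] (mkA (X 1) ^ p) - (1 : k') ⊗ₜ[k] mkA (X 0) - a' ⊗ₜ (mkA (X 0) ^ p) := by
        simp [hχ, Algebra.TensorProduct.algebraMap_apply, Algebra.TensorProduct.tmul_pow,
          Algebra.TensorProduct.tmul_mul_tmul, algebraMap_eq]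
      have h2 : (a' : k') ⊗ₜ[k] (mkA (X 0) ^ p) = (1 : k') ⊗ₜ[k] (a • (mkA (X 0) ^ p)) := by
        rw [ha']
        rw [show (algebraMap k k' a : k') = a • (1 : k') by
          simp [Algebra.smul_def]]
        rw [smul_tmul]
      have hCa : mkA (C a) = algebraMap k (ExampleAlg k p a) a := by
        simpa [algebraMap_eq] using mkA.commutes a
      have h3 : (1 : k') ⊗ₜ[k] (a • (mkA (X 0) ^ p)) = (1 : k') ⊗ₜ[k] mkA (C a * X 0 ^ p) := by
        rw [map_mul, hCa, ← Algebra.smul_def, map_pow]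
      rw [h1, h2, h3, ← map_pow, ← tmul_sub, ← tmul_sub, ← map_sub, ← map_sub]
      show (1 : k') ⊗ₜ[k] mkA f = 0
      rw [hmkAf, tmul_zero]
    have key1 : t ^ p = (1 : k') ⊗ₜ[k] mkA (X 0) := by
      have ht' : t = χ (X 1 - C b * X 0) := by
        simp [hχ, ht, Algebra.TensorProduct.algebraMap_apply,
          Algebra.TensorProduct.tmul_mul_tmul, algebraMap_eq]
      have hpow : (X 1 - C b * X 0 : MvPolynomial (Fin 2) k') ^ p =
          (X 1 ^ p - X 0 - C a' * X 0 ^ p) + X 0 := by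
        rw [sub_pow_char, mul_pow, ← C_pow, hb]
        ring
      rw [ht', ← map_pow, hpow, map_add, hχf, zero_add]
      simp [hχ]
    have hφ0 : φ ((1 : k') ⊗ₜ[k] mkA (X 0)) = Polynomial.X ^ p := by
      simp [hφ, hψ₀, hmkA, Ideal.Quotient.liftₐ_apply, hg]
      erw [Ideal.Quotient.lift_mk]
      simp
    have hφ1 : φ ((1 : k') ⊗ₜ[k] mkA (X 1)) =
        Polynomial.X + Polynomial.C b * Polynomial.X ^ p := by
      simp [hφ, hψ₀, hmkA, Ideal.Quotient.liftₐ_apply, hg]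
      erw [Ideal.Quotient.lift_mk]
      simp
    have hφt : φ t = Polynomial.X := by
      have : φ (b ⊗ₜ[k] mkA (X 0)) = Polynomial.C b * Polynomial.X ^ p := by
        simp [hφ, hψ₀, hmkA, Ideal.Quotient.liftₐ_apply, hg, Algebra.ofId_apply,
          Polynomial.algebraMap_apply]
        left
        erw [Ideal.Quotient.lift_mk]
        simp
      rw [ht, map_sub, hφ1, this]
      ring
    have comp1 : φ.comp ψ = AlgHom.id k' (Polynomial k') := by
      apply Polynomial.algHom_ext
      simp [hψ, hφt]
    have comp2 : ψ.comp φ = AlgHom.id k' (k' ⊗[k] ExampleAlg k p a) := by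
      apply Algebra.TensorProduct.ext
      · exact Subsingleton.elim _ _
      · apply Ideal.Quotient.algHom_ext
        apply MvPolynomial.algHom_ext
        intro i
        fin_cases i
        · show ψ (φ ((1 : k') ⊗ₜ[k] mkA (X 0))) = (1 : k') ⊗ₜ[k] mkA (X 0)
          rw [hφ0, map_pow]
          simpa [hψ] using key1
        · show ψ (φ ((1 : k') ⊗ₜ[k] mkA (X 1))) = (1 : k') ⊗ₜ[k] mkA (X 1)
          rw [hφ1, map_add, map_mul, map_pow]
          have hb' : ψ (Polynomial.C b) = b ⊗ₜ (1 : ExampleAlg k p a) := by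
            simp [hψ, Polynomial.aeval_C, Algebra.TensorProduct.algebraMap_apply]
          have : ψ Polynomial.X = t := by simp [hψ]
          rw [this, hb', key1, Algebra.TensorProduct.tmul_mul_tmul, one_mul, mul_one, ht]
          ring
    exact ⟨AlgEquiv.ofAlgHom φ ψ comp1 comp2⟩
end

section
/- Let $k$ be a field of characteristic $p \geq 2$, let $a \in k$ with $a \notin k^p$, and let $A = k[X,Y]/(Y^p - X - aX^p)$. Then $A$ is not a unique factorization domain. -/
open MvPolynomial

section Aux

variable {k K : Type*} [Field k] [Field K] [Algebra k K]

/-- The invariant predicate: coefficients below `p` come from `k`, and the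
`p`-th coefficient is congruent to `c` times the first coefficient mod `k`. -/
def Vcond (p : ℕ) (c : K) (f : Polynomial K) : Prop :=
  (∀ i, i < p → f.coeff i ∈ (algebraMap k K).range) ∧
    f.coeff p - c * f.coeff 1 ∈ (algebraMap k K).range

lemma Vcond_mul {p : ℕ} (hp : 2 ≤ p) {c : K} {f g : Polynomial K}
    (hf : Vcond (k := k) p c f) (hg : Vcond (k := k) p c g) :
    Vcond (k := k) p c (f * g) := by
  obtain ⟨m, rfl⟩ : ∃ m, p = m + 2 := ⟨p - 2, by omega⟩
  obtain ⟨hf1, hf2⟩ := hf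
  obtain ⟨hg1, hg2⟩ := hg
  constructor
  · intro i hi
    rw [Polynomial.coeff_mul]
    refine sum_mem fun x hx => ?_
    rw [Finset.HasAntidiagonal.mem_antidiagonal] at hx
    exact mul_mem (hf1 x.1 (by omega)) (hg1 x.2 (by omega))
  · rw [Polynomial.coeff_mul, Polynomial.coeff_mul,
      Finset.Nat.sum_antidiagonal_eq_sum_range_succ_mk,
      Finset.Nat.sum_antidiagonal_eq_sum_range_succ_mk,
      Finset.sum_range_succ', Finset.sum_range_succ]
    have e2 : ∑ i ∈ Finset.range (1 + 1), f.coeff i * g.coeff (1 - i)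
        = f.coeff 0 * g.coeff 1 + f.coeff 1 * g.coeff 0 := by
      simp [Finset.sum_range_succ]
    rw [e2]
    have key : (∑ i ∈ Finset.range (m + 1), f.coeff (i + 1) * g.coeff (m + 2 - (i + 1))
          + f.coeff (m + 1 + 1) * g.coeff (m + 2 - (m + 1 + 1))
          + f.coeff 0 * g.coeff (m + 2 - 0))
          - c * (f.coeff 0 * g.coeff 1 + f.coeff 1 * g.coeff 0)
        = (∑ i ∈ Finset.range (m + 1), f.coeff (i + 1) * g.coeff (m + 2 - (i + 1)))
          + (f.coeff 0 * (g.coeff (m + 2) - c * g.coeff 1)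
            + (f.coeff (m + 2) - c * f.coeff 1) * g.coeff 0) := by
      norm_num
      ring
    rw [key]
    refine add_mem (sum_mem fun i hi => ?_) (add_mem (mul_mem (hf1 0 (by omega)) hg2)
      (mul_mem hf2 (hg1 0 (by omega))))
    rw [Finset.mem_range] at hi
    exact mul_mem (hf1 (i + 1) (by omega)) (hg1 (m + 2 - (i + 1)) (by omega))

lemma Vcond_add {p : ℕ} {c : K} {f g : Polynomial K}
    (hf : Vcond (k := k) p c f) (hg : Vcond (k := k) p c g) :
    Vcond (k := k) p c (f + g) := by
  obtain ⟨hf1, hf2⟩ := hf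
  obtain ⟨hg1, hg2⟩ := hg
  constructor
  · intro i hi
    rw [Polynomial.coeff_add]
    exact add_mem (hf1 i hi) (hg1 i hi)
  · rw [Polynomial.coeff_add, Polynomial.coeff_add]
    have e : f.coeff p + g.coeff p - c * (f.coeff 1 + g.coeff 1)
        = (f.coeff p - c * f.coeff 1) + (g.coeff p - c * g.coeff 1) := by ring
    rw [e]
    exact add_mem hf2 hg2

lemma Vcond_C {p : ℕ} (hp : 2 ≤ p) {c : K} (b : k) :
    Vcond (k := k) p c (Polynomial.C (algebraMap k K b)) := by
  constructor
  · intro i hi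
    rw [Polynomial.coeff_C]
    split
    · exact ⟨b, rfl⟩
    · exact zero_mem _
  · rw [Polynomial.coeff_C, Polynomial.coeff_C,
      if_neg (by omega : ¬ p = 0), if_neg (by omega : ¬ (1:ℕ) = 0)]
    simpa using zero_mem ((algebraMap k K).range)

lemma Vcond_Xp {p : ℕ} (hp : 2 ≤ p) {c : K} :
    Vcond (k := k) p c ((Polynomial.X : Polynomial K) ^ p) := by
  constructor
  · intro i hi
    rw [Polynomial.coeff_X_pow, if_neg (by omega)]
    exact zero_mem _
  · rw [Polynomial.coeff_X_pow, Polynomial.coeff_X_pow,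
      if_pos rfl, if_neg (by omega : ¬ (1:ℕ) = p)]
    exact ⟨1, by simp⟩

lemma Vcond_gen1 {p : ℕ} (hp : 2 ≤ p) {c : K} :
    Vcond (k := k) p c ((Polynomial.X : Polynomial K) + Polynomial.C c * Polynomial.X ^ p) := by
  constructor
  · intro i hi
    rw [Polynomial.coeff_add, Polynomial.coeff_X, Polynomial.coeff_C_mul, Polynomial.coeff_X_pow,
      if_neg (by omega : ¬ i = p)]
    split
    · exact ⟨1, by simp⟩
    · simpa using zero_mem ((algebraMap k K).range)
  · rw [Polynomial.coeff_add, Polynomial.coeff_add, Polynomial.coeff_X, Polynomial.coeff_X,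
      Polynomial.coeff_C_mul, Polynomial.coeff_C_mul, Polynomial.coeff_X_pow,
      Polynomial.coeff_X_pow, if_pos rfl, if_neg (by omega : ¬ (1:ℕ) = p)]
    simpa using zero_mem ((algebraMap k K).range)

/-- Every polynomial is congruent to its value at `0` modulo the span of the variables. -/
lemma sub_C_eval_mem_span (F : MvPolynomial (Fin 2) k) :
    F - C (MvPolynomial.eval (fun _ => (0 : k)) F) ∈
      Ideal.span {(X 0 : MvPolynomial (Fin 2) k), X 1} := by
  induction F using MvPolynomial.induction_on with
  | C a => simp
  | add f g hf hg =>
      have e : f + g - C (MvPolynomial.eval (fun _ => (0 : k)) (f + g))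
          = (f - C (MvPolynomial.eval (fun _ => (0 : k)) f))
            + (g - C (MvPolynomial.eval (fun _ => (0 : k)) g)) := by
        rw [map_add, map_add]; ring
      rw [e]
      exact add_mem hf hg
  | mul_X f i hf =>
      have e : MvPolynomial.eval (fun _ => (0 : k)) (f * X i) = 0 := by simp
      rw [e, map_zero, sub_zero]
      refine Ideal.mul_mem_left _ f (Ideal.subset_span ?_)
      fin_cases i
      · exact Set.mem_insert _ _
      · exact Set.mem_insert_iff.mpr (Or.inr rfl)

end Aux

set_option maxHeartbeats 1000000 in
set_option synthInstance.maxHeartbeats 400000 in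
/-- **Example 2, negative part.** Let `k` be a field of characteristic `p ≥ 2`, `a ∈ k`
with `a ∉ kᵖ`, and `A = k[X,Y]/(Y^p - X - a·X^p)`.  Then `A` is not a unique
factorization domain: it is not the case that `A` is an integral domain in which
factorization into irreducibles exists and is unique. -/
theorem exampleAlg_not_UFD (k : Type*) [Field k] (p : ℕ) [CharP k p]
    (hp : 2 ≤ p) (a : k) (ha : ∀ c : k, c ^ p ≠ a) :
    ¬ ∃ _ : IsDomain (ExampleAlg k p a), UniqueFactorizationMonoid (ExampleAlg k p a) := by
  rintro ⟨hdom, hufd⟩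
  haveI := hdom
  haveI := hufd
  have hp0 : p ≠ 0 := by omega
  have hP : p.Prime := (CharP.char_is_prime_or_zero k p).resolve_right hp0
  haveI := Fact.mk hP
  -- the field K = k(a^{1/p})
  set f0 : Polynomial k := Polynomial.X ^ p - Polynomial.C a with hf0
  haveI : Fact (Irreducible f0) := ⟨X_pow_sub_C_irreducible_of_prime hP ha⟩
  set K := AdjoinRoot f0 with hK
  set c : K := AdjoinRoot.root f0 with hc
  have hcp : c ^ p = algebraMap k K a := by
    have h := AdjoinRoot.eval₂_root f0
    rw [hf0] at h
    simp only [Polynomial.eval₂_sub, Polynomial.eval₂_pow, Polynomial.eval₂_X,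
      Polynomial.eval₂_C, sub_eq_zero] at h
    rw [show algebraMap k K = AdjoinRoot.of f0 from AdjoinRoot.algebraMap_eq f0]
    exact h
  have hinj : Function.Injective (algebraMap k K) := (algebraMap k K).injective
  haveI : CharP K p := charP_of_injective_algebraMap hinj p
  -- the homomorphism ψ : A → K[T]
  set g : Fin 2 → Polynomial K :=
    ![Polynomial.X ^ p, Polynomial.X + Polynomial.C c * Polynomial.X ^ p] with hg
  set I : Ideal (MvPolynomial (Fin 2) k) :=
    Ideal.span {(X 1 : MvPolynomial (Fin 2) k) ^ p - X 0 - C a * (X 0) ^ p} with hI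
  set rel : MvPolynomial (Fin 2) k := X 1 ^ p - X 0 - C a * X 0 ^ p with hrel
  have hIrel : rel ∈ I := by rw [hI, hrel]; exact Ideal.subset_span rfl
  have hφrel : (MvPolynomial.aeval g) rel = 0 := by
    rw [hrel]
    simp only [map_sub, map_mul, map_pow, MvPolynomial.aeval_X, MvPolynomial.aeval_C]
    rw [hg]
    simp only [Matrix.cons_val_one, Matrix.head_cons, Matrix.cons_val_zero]
    rw [add_pow_char, mul_pow, ← Polynomial.C_pow, hcp, Polynomial.algebraMap_apply]
    ring
  have hIker : ∀ F ∈ I, (MvPolynomial.aeval g).toRingHom F = 0 := by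
    intro F hF
    rw [hI, Ideal.mem_span_singleton] at hF
    obtain ⟨G, rfl⟩ := hF
    rw [map_mul]
    have e : (MvPolynomial.aeval g).toRingHom rel = 0 := hφrel
    rw [e, zero_mul]
  set ψ : ExampleAlg k p a →+* Polynomial K :=
    Ideal.Quotient.lift I (MvPolynomial.aeval g).toRingHom hIker with hψdef
  set x : ExampleAlg k p a := Ideal.Quotient.mk I (X 0) with hx
  set y : ExampleAlg k p a := Ideal.Quotient.mk I (X 1) with hy
  have hψx : ψ x = Polynomial.X ^ p := by
    rw [hψdef, hx, Ideal.Quotient.lift_mk]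
    simp [hg]
  have hψy : ψ y = Polynomial.X + Polynomial.C c * Polynomial.X ^ p := by
    rw [hψdef, hy, Ideal.Quotient.lift_mk]
    simp [hg]
  have hrelA : y ^ p = x + Ideal.Quotient.mk I (C a) * x ^ p := by
    have h0 : Ideal.Quotient.mk I rel = 0 := Ideal.Quotient.eq_zero_iff_mem.mpr hIrel
    rw [hrel, map_sub, map_sub, map_pow, map_mul, map_pow, ← hx, ← hy,
      sub_sub, sub_eq_zero] at h0
    exact h0
  have hxne : x ≠ 0 := by
    intro h
    rw [h, map_zero] at hψx
    exact pow_ne_zero p Polynomial.X_ne_zero hψx.symm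
  have hxnu : ¬ IsUnit x := by
    intro h
    have h2 := h.map ψ
    rw [hψx] at h2
    exact Polynomial.not_isUnit_X ((isUnit_pow_iff hp0).mp h2)
  obtain ⟨q, hqirr, hqx⟩ := WfDvdMonoid.exists_irreducible_factor hxnu hxne
  have hqprime : Prime q := UniqueFactorizationMonoid.irreducible_iff_prime.mp hqirr
  have hqy : q ∣ y := by
    apply hqprime.dvd_of_dvd_pow (n := p)
    rw [hrelA]
    exact dvd_add hqx ((dvd_pow hqx hp0).mul_left _)
  -- evaluation at the origin
  have hε0ker : ∀ F ∈ I, (MvPolynomial.eval (fun _ => (0:k))) F = 0 := by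
    intro F hF
    rw [hI, Ideal.mem_span_singleton] at hF
    obtain ⟨G, rfl⟩ := hF
    rw [map_mul]
    have e : (MvPolynomial.eval (fun _ => (0:k))) rel = 0 := by
      rw [hrel]; simp [zero_pow hp0]
    rw [e, zero_mul]
  set ε : ExampleAlg k p a →+* k :=
    Ideal.Quotient.lift I (MvPolynomial.eval (fun _ => (0:k))) hε0ker with hεdef
  have hεsurj : Function.Surjective ε := by
    intro l
    refine ⟨Ideal.Quotient.mk I (C l), ?_⟩
    rw [hεdef, Ideal.Quotient.lift_mk]
    simp
  have hker : RingHom.ker ε = Ideal.span {x, y} := by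
    apply le_antisymm
    · intro z hz
      obtain ⟨F, rfl⟩ := Ideal.Quotient.mk_surjective z
      rw [RingHom.mem_ker, hεdef, Ideal.Quotient.lift_mk] at hz
      have hmem : F ∈ Ideal.span {(X 0 : MvPolynomial (Fin 2) k), X 1} := by
        have h3 := sub_C_eval_mem_span F
        rw [hz, map_zero, sub_zero] at h3
        exact h3
      have h4 := Ideal.mem_map_of_mem (Ideal.Quotient.mk I) hmem
      rwa [Ideal.map_span, Set.image_insert_eq, Set.image_singleton, ← hx, ← hy] at h4
    · rw [Ideal.span_le]
      rintro z hz
      simp only [Set.mem_insert_iff, Set.mem_singleton_iff] at hz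
      rcases hz with rfl | rfl
      · rw [SetLike.mem_coe, RingHom.mem_ker, hx, hεdef, Ideal.Quotient.lift_mk]; simp
      · rw [SetLike.mem_coe, RingHom.mem_ker, hy, hεdef, Ideal.Quotient.lift_mk]; simp
  have hmax : (Ideal.span {x, y}).IsMaximal := by
    rw [← hker]
    exact RingHom.ker_isMaximal_of_surjective ε hεsurj
  have hspan_eq : Ideal.span {x, y} = Ideal.span {q} := by
    refine hmax.eq_of_le ?_ ?_
    · rw [Ne, Ideal.span_singleton_eq_top]
      exact hqirr.not_isUnit
    · rw [Ideal.span_le]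
      rintro z hz
      simp only [Set.mem_insert_iff, Set.mem_singleton_iff] at hz
      rcases hz with rfl | rfl
      · exact Ideal.mem_span_singleton.mpr hqx
      · exact Ideal.mem_span_singleton.mpr hqy
  have hqmem : q ∈ Ideal.span {x, y} := by
    rw [hspan_eq]; exact Ideal.mem_span_singleton_self q
  obtain ⟨fA, gA, hq_eq⟩ := Ideal.mem_span_pair.mp hqmem
  have h0p : ¬ (0:ℕ) = p := by omega
  have h1p : ¬ (1:ℕ) = p := by omega
  -- coefficient 0 of ψ q vanishes
  have hc0 : (ψ q).coeff 0 = 0 := by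
    rw [← hq_eq, map_add, map_mul, map_mul, hψx, hψy, Polynomial.coeff_add,
      Polynomial.mul_coeff_zero, Polynomial.mul_coeff_zero]
    simp [Polynomial.coeff_X_pow, h0p]
  -- ψ q divides X
  have hdvd1 : ψ q ∣ ψ x := map_dvd ψ hqx
  have hdvd2 : ψ q ∣ ψ y := map_dvd ψ hqy
  have hdvdX : ψ q ∣ Polynomial.X := by
    have hXeq : (Polynomial.X : Polynomial K) = ψ y - Polynomial.C c * ψ x := by
      rw [hψx, hψy]; ring
    rw [hXeq]
    exact dvd_sub hdvd2 (hdvd1.mul_left _)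
  obtain ⟨e, he⟩ := hdvdX
  -- the V-invariant on the range of ψ
  have hVall : ∀ F : MvPolynomial (Fin 2) k, Vcond (k := k) p c ((MvPolynomial.aeval g) F) := by
    intro F
    induction F using MvPolynomial.induction_on with
    | C b =>
        rw [MvPolynomial.aeval_C, Polynomial.algebraMap_apply]
        exact Vcond_C hp b
    | add f1 f2 h1 h2 =>
        rw [map_add]; exact Vcond_add h1 h2
    | mul_X f1 i h1 =>
        rw [map_mul, MvPolynomial.aeval_X]
        refine Vcond_mul hp h1 ?_
        fin_cases i
        · rw [hg]
          simp only [Matrix.cons_val_zero]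
          exact Vcond_Xp hp
        · rw [hg]
          simp only [Matrix.cons_val_one, Matrix.head_cons]
          exact Vcond_gen1 hp
  have hVq : Vcond (k := k) p c (ψ q) := by
    obtain ⟨Fq, hFq⟩ := Ideal.Quotient.mk_surjective (I := I) q
    rw [← hFq, hψdef, Ideal.Quotient.lift_mk]
    exact hVall Fq
  rcases Polynomial.irreducible_X.isUnit_or_isUnit he with hu | hu
  · obtain ⟨r, hr, hCr⟩ := Polynomial.isUnit_iff.mp hu
    rw [← hCr, Polynomial.coeff_C_zero] at hc0
    exact hr.ne_zero hc0
  · obtain ⟨r, hr, hCr⟩ := Polynomial.isUnit_iff.mp hu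
    have hr0 : r ≠ 0 := hr.ne_zero
    have hqe : ψ q * Polynomial.C r = Polynomial.X := by rw [hCr]; exact he.symm
    have hψq : ψ q = Polynomial.C r⁻¹ * Polynomial.X := by
      calc ψ q = ψ q * Polynomial.C r * Polynomial.C r⁻¹ := by
            rw [mul_assoc, ← Polynomial.C_mul, mul_inv_cancel₀ hr0, Polynomial.C_1, mul_one]
        _ = Polynomial.C r⁻¹ * Polynomial.X := by rw [hqe]; ring
    have hco1 : (ψ q).coeff 1 = r⁻¹ := by
      rw [hψq, Polynomial.coeff_C_mul, Polynomial.coeff_X_one, mul_one]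
    have hcop : (ψ q).coeff p = 0 := by
      rw [hψq, Polynomial.coeff_C_mul, Polynomial.coeff_X, if_neg h1p, mul_zero]
    obtain ⟨b, hb⟩ := hVq.1 1 (by omega)
    rw [hco1] at hb
    obtain ⟨d, hd⟩ := hVq.2
    rw [hcop, hco1, zero_sub] at hd
    have hbne : b ≠ 0 := by
      intro h
      rw [h, map_zero] at hb
      exact inv_ne_zero hr0 hb.symm
    have hcval : c = algebraMap k K (-(d * b⁻¹)) := by
      rw [map_neg, map_mul, map_inv₀, hb, inv_inv, hd, neg_mul, neg_neg,
        mul_assoc, inv_mul_cancel₀ hr0, mul_one]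
    apply ha (-(d * b⁻¹))
    apply hinj
    rw [map_pow, ← hcval, hcp]
end

section
/- Let $k$ be a field of characteristic $p \geq 2$, let $a \in k$ with $a \notin k^p$, and let $A = k[X,Y]/(Y^p - X - aX^p)$. Then $A$ is not isomorphic to the polynomial ring $k[T]$ as a $k$-algebra. -/
open MvPolynomial

open Polynomial in
lemma aux_const {k : Type*} [Field k] {p : ℕ} (hp : 2 ≤ p) {a : k}
    (ha : ∀ c : k, c ^ p ≠ a) {f g : k[X]}
    (h : g ^ p = f + Polynomial.C a * f ^ p) :
    f.natDegree = 0 ∧ g.natDegree = 0 := by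
  have hp0 : p ≠ 0 := by omega
  have ha0 : a ≠ 0 := fun h0 => ha 0 (by simp [h0, zero_pow hp0])
  have hm : f.natDegree = 0 := by
    by_contra hm
    have hm1 : 1 ≤ f.natDegree := Nat.one_le_iff_ne_zero.2 hm
    have hf0 : f ≠ 0 := fun h0 => by simp [h0] at hm
    have h' : g ^ p - Polynomial.C a * f ^ p = f := by rw [h]; ring
    have hdg : (g ^ p).natDegree = p * g.natDegree := natDegree_pow g p
    have hdf : (Polynomial.C a * f ^ p).natDegree = p * f.natDegree := by
      rw [natDegree_C_mul ha0, natDegree_pow]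
    have hmlt : f.natDegree < p * f.natDegree := by nlinarith
    rcases lt_trichotomy g.natDegree f.natDegree with hlt | heq | hgt
    · have hd : (g ^ p - Polynomial.C a * f ^ p).natDegree = p * f.natDegree := by
        rw [natDegree_sub_eq_right_of_natDegree_lt]
        · exact hdf
        · rw [hdg, hdf]; exact mul_lt_mul_of_pos_left hlt (by omega : 0 < p)
      rw [h'] at hd; omega
    · -- equal degrees: leading coefficients must cancel
      have hc := congrArg (fun q => q.coeff (p * f.natDegree)) h'
      simp only [Polynomial.coeff_sub] at hc
      have h1 : (g ^ p).coeff (p * f.natDegree) = g.leadingCoeff ^ p := by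
        conv_lhs => rw [heq.symm, show p * g.natDegree = (g ^ p).natDegree from (natDegree_pow g p).symm]
        rw [coeff_natDegree, leadingCoeff_pow]
      have h2 : (Polynomial.C a * f ^ p).coeff (p * f.natDegree)
          = a * f.leadingCoeff ^ p := by
        rw [Polynomial.coeff_C_mul]
        conv_lhs => rw [show p * f.natDegree = (f ^ p).natDegree from (natDegree_pow f p).symm]
        rw [coeff_natDegree, leadingCoeff_pow]
      have h3 : f.coeff (p * f.natDegree) = 0 :=
        coeff_eq_zero_of_natDegree_lt hmlt
      rw [h1, h2, h3] at hc
      have hlf : f.leadingCoeff ≠ 0 := leadingCoeff_ne_zero.2 hf0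
      apply ha (g.leadingCoeff * f.leadingCoeff⁻¹)
      rw [mul_pow, inv_pow, mul_inv_eq_iff_eq_mul₀ (pow_ne_zero _ hlf)]
      linear_combination hc
    · have hd : (g ^ p - Polynomial.C a * f ^ p).natDegree = p * g.natDegree := by
        rw [natDegree_sub_eq_left_of_natDegree_lt]
        · exact hdg
        · rw [hdg, hdf]; exact mul_lt_mul_of_pos_left hgt (by omega : 0 < p)
      rw [h'] at hd
      have : f.natDegree < p * g.natDegree := by nlinarith
      omega
  refine ⟨hm, ?_⟩
  obtain ⟨c, rfl⟩ := natDegree_eq_zero.1 hm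
  have : (g ^ p).natDegree = 0 := by
    rw [h, ← Polynomial.C_pow, ← Polynomial.C_mul, ← Polynomial.C_add, natDegree_C]
  rw [natDegree_pow] at this
  rcases Nat.mul_eq_zero.1 this with h' | h' <;> omega

/-- **Example 2, nontriviality.** Let `k` be a field of characteristic `p ≥ 2`, `a ∈ k`
with `a ∉ kᵖ`, and `A = k[X,Y]/(Y^p - X - a·X^p)`.  Then `A` is not isomorphic to the
polynomial ring `k[T]` as a `k`-algebra. -/
theorem exampleAlg_not_polynomial_ring (k : Type*) [Field k] (p : ℕ) [CharP k p]
    (hp : 2 ≤ p) (a : k) (ha : ∀ c : k, c ^ p ≠ a) :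
    IsEmpty (ExampleAlg k p a ≃ₐ[k] Polynomial k) := by
  constructor
  intro e
  set I : Ideal (MvPolynomial (Fin 2) k) :=
    Ideal.span {(X 1 : MvPolynomial (Fin 2) k) ^ p - X 0 - C a * (X 0) ^ p} with hI
  set f : Polynomial k := e (Ideal.Quotient.mk I (X 0)) with hf
  set g : Polynomial k := e (Ideal.Quotient.mk I (X 1)) with hg
  -- the relation
  have h0 : Ideal.Quotient.mk I ((X 1 : MvPolynomial (Fin 2) k) ^ p - X 0 - C a * (X 0) ^ p) = 0 :=
    Ideal.Quotient.eq_zero_iff_mem.2 (Ideal.subset_span rfl)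
  have halg : Ideal.Quotient.mk I (C a) = algebraMap k (ExampleAlg k p a) a := rfl
  have h0' : Ideal.Quotient.mk I (X 1) ^ p - Ideal.Quotient.mk I (X 0)
      - Ideal.Quotient.mk I (C a) * Ideal.Quotient.mk I (X 0) ^ p = 0 := by
    simpa only [map_sub, map_mul, map_pow] using h0
  have hrelA : (Ideal.Quotient.mk I (X 1)) ^ p
      = Ideal.Quotient.mk I (X 0) + algebraMap k (ExampleAlg k p a) a * (Ideal.Quotient.mk I (X 0)) ^ p := by
    rw [← halg]; linear_combination h0'
  have hrel : g ^ p = f + Polynomial.C a * f ^ p := by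
    have := congrArg e hrelA
    simpa [map_add, map_mul, map_pow, AlgEquiv.commutes, ← Polynomial.algebraMap_eq] using this
  obtain ⟨hfd, hgd⟩ := aux_const hp ha hrel
  obtain ⟨c, hc⟩ := Polynomial.natDegree_eq_zero.1 hfd
  obtain ⟨d, hd⟩ := Polynomial.natDegree_eq_zero.1 hgd
  -- surjectivity / generation
  set v : Fin 2 → Polynomial k := ![f, g] with hv
  have hψ : (e.toAlgHom.comp (Ideal.Quotient.mkₐ k I)) = MvPolynomial.aeval v := by
    apply MvPolynomial.algHom_ext
    intro i
    fin_cases i <;> simp [hv, hf, hg]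
  have hsurj : Function.Surjective (MvPolynomial.aeval v : MvPolynomial (Fin 2) k →ₐ[k] Polynomial k) := by
    rw [← hψ]
    exact e.surjective.comp Ideal.Quotient.mk_surjective
  obtain ⟨q, hq⟩ := hsurj Polynomial.X
  have hmem : Polynomial.X ∈ (⊥ : Subalgebra k (Polynomial k)) := by
    have hX : Polynomial.X ∈ Algebra.adjoin k (Set.range v) := by
      rw [Algebra.adjoin_range_eq_range_aeval]
      exact ⟨q, hq⟩
    refine Algebra.adjoin_le ?_ hX
    rintro z ⟨i, rfl⟩
    fin_cases i
    · refine Algebra.mem_bot.2 ⟨c, ?_⟩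
      show algebraMap k (Polynomial k) c = f
      rw [Polynomial.algebraMap_eq, hc]
    · refine Algebra.mem_bot.2 ⟨d, ?_⟩
      show algebraMap k (Polynomial k) d = g
      rw [Polynomial.algebraMap_eq, hd]
  obtain ⟨c', hc'⟩ := Algebra.mem_bot.1 hmem
  rw [Polynomial.algebraMap_eq] at hc'
  have h1 := congrArg Polynomial.natDegree hc'
  simp [Polynomial.natDegree_X, Polynomial.natDegree_C] at h1
end
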